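/- arXiv:1508.00423 — 9 statements merged into one kernel-verified Lean document; each statement's English description precedes it below -/
import Mathlib

section
/- Let G be a countable group and μ a probability measure on G with μ(g) > 0 for all g, such that for every g ∈ G the quantity sup_{x ∈ G} μ(g⁻¹x)/μ(x) is finite. Let V be the quotient Hilbert space ℓ²(G, μ)/ℝ·1 of ℓ²(G, μ) by the (closed) line of constant functions. Let c : G × G → ℝ be a bounded function satisfying the 2-cocycle relation c(y, z) − c(xy, z) + c(x, yz) − c(x, y) = 0 for all x, y, z ∈ G, and suppose there is no function φ : G → ℝ with c(x, y) = φ(y) − φ(xy) + φ(x) for all x, y ∈ G. For g ∈ G let λ(g) be the operator on V induced by (λ(g)f)(x) = f(g⁻¹x) on ℓ²(G, μ), and let b(g) ∈ V be the class of the function x ↦ c(x⁻¹, g). Then each λ(g) is a well-defined bounded invertible operator on V, the map g ↦ (v ↦ λ(g)v + b(g)) is an action of G on V by continuous affine transformations, the orbit of 0 under this action is bounded, and the action has no fixed point. -/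
open MeasureTheory
open scoped ENNReal

/-- The measure on a countable group `G` determined by the weight function `μ`:
`mμ({g}) = μ(g)`. -/
noncomputable def weightedMeasure (G : Type) [MeasurableSpace G] (μ : G → ℝ) :
    Measure G :=
  Measure.count.withDensity fun x => ENNReal.ofReal (μ x)

/-- The line of constant functions in `ℓ²(G, μ)`, i.e. the span of the class of the
constant function `1`. -/
noncomputable def constantLine (G : Type) [MeasurableSpace G] (μ : G → ℝ) :
    Submodule ℝ (Lp ℝ 2 (weightedMeasure G μ)) :=
  Submodule.span ℝ
    {f : Lp ℝ 2 (weightedMeasure G μ) |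
      (f : G → ℝ) =ᵐ[weightedMeasure G μ] fun _ => (1 : ℝ)}

set_option linter.unusedSectionVars false
set_option linter.unusedVariables false

section Aux

variable {G : Type} [Group G] [Countable G] [MeasurableSpace G] [DiscreteMeasurableSpace G]
  (μ : G → ℝ)

lemma wm_lintegral (F : G → ℝ≥0∞) :
    ∫⁻ x, F x ∂(weightedMeasure G μ) = ∑' x, F x * ENNReal.ofReal (μ x) := by
  rw [weightedMeasure,
    lintegral_withDensity_eq_lintegral_mul _ Measurable.of_discrete Measurable.of_discrete,
    lintegral_count]
  exact tsum_congr fun x => mul_comm _ _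

lemma wm_apply (s : Set G) :
    weightedMeasure G μ s = ∑' x : s, ENNReal.ofReal (μ x) := by
  rw [weightedMeasure, withDensity_apply _ MeasurableSet.of_discrete,
    ← lintegral_indicator MeasurableSet.of_discrete, lintegral_count]
  exact (tsum_subtype s fun x => ENNReal.ofReal (μ x)).symm

lemma wm_singleton (a : G) : weightedMeasure G μ {a} = ENNReal.ofReal (μ a) := by
  rw [wm_apply]
  exact tsum_singleton a fun x => ENNReal.ofReal (μ x)

lemma wm_pos (h_pos : ∀ g : G, 0 < μ g) {s : Set G} (hs : s.Nonempty) :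
    weightedMeasure G μ s ≠ 0 := by
  obtain ⟨a, ha⟩ := hs
  intro h0
  have h1 : weightedMeasure G μ {a} ≤ weightedMeasure G μ s :=
    measure_mono (Set.singleton_subset_iff.2 ha)
  rw [wm_singleton, h0] at h1
  exact absurd h1 (not_le.2 (ENNReal.ofReal_pos.2 (h_pos a)))

lemma wm_ae (h_pos : ∀ g : G, 0 < μ g) : ae (weightedMeasure G μ) = ⊤ :=
  ae_eq_top.2 fun a => wm_pos μ h_pos ⟨a, rfl⟩

lemma wm_funext (h_pos : ∀ g : G, 0 < μ g) {β : Type*} {f g : G → β}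
    (h : f =ᵐ[weightedMeasure G μ] g) : f = g := by
  funext x
  rw [Filter.EventuallyEq, wm_ae μ h_pos, Filter.eventually_top] at h
  exact h x

lemma wm_univ (h_pos : ∀ g : G, 0 < μ g) (h_sum : ∑' g : G, μ g = 1) :
    weightedMeasure G μ Set.univ = 1 := by
  have hsummable : Summable μ := by
    by_contra h
    rw [tsum_eq_zero_of_not_summable h] at h_sum
    norm_num at h_sum
  rw [wm_apply, tsum_univ fun x => ENNReal.ofReal (μ x),
    ← ENNReal.ofReal_tsum_of_nonneg (fun x => (h_pos x).le) hsummable, h_sum, ENNReal.ofReal_one]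

lemma wm_prob (h_pos : ∀ g : G, 0 < μ g) (h_sum : ∑' g : G, μ g = 1) :
    IsProbabilityMeasure (weightedMeasure G μ) := ⟨wm_univ μ h_pos h_sum⟩

lemma wm_translate (g : G) (F : G → ℝ≥0∞) :
    ∫⁻ x, F (g⁻¹ * x) ∂(weightedMeasure G μ) = ∑' y, F y * ENNReal.ofReal (μ (g * y)) := by
  rw [wm_lintegral,
    ← Equiv.tsum_eq (Equiv.mulLeft g) (fun x => F (g⁻¹ * x) * ENNReal.ofReal (μ x))]
  simp [inv_mul_cancel_left]

lemma wm_mod (h_pos : ∀ g : G, 0 < μ g)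
    (h_mod : ∀ g : G, ∃ C : ℝ, ∀ x : G, μ (g⁻¹ * x) / μ x ≤ C) (g : G) :
    ∃ C : ℝ, 0 ≤ C ∧ ∀ x : G, μ (g * x) ≤ C * μ x := by
  obtain ⟨C, hC⟩ := h_mod g⁻¹
  simp only [inv_inv] at hC
  have hC0 : 0 ≤ C := le_trans (div_pos (h_pos (g * 1)) (h_pos 1)).le (hC 1)
  exact ⟨C, hC0, fun x => (div_le_iff₀ (h_pos x)).1 (hC x)⟩

lemma wm_translate_eLpNorm (g : G) {C : ℝ} (hC0 : 0 ≤ C) (hC : ∀ x : G, μ (g * x) ≤ C * μ x)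
    (f : G → ℝ) :
    eLpNorm (fun x => f (g⁻¹ * x)) 2 (weightedMeasure G μ)
      ≤ ENNReal.ofReal C ^ (2 : ℝ)⁻¹ * eLpNorm f 2 (weightedMeasure G μ) := by
  rw [eLpNorm_eq_lintegral_rpow_enorm_toReal (by norm_num) (by norm_num),
      eLpNorm_eq_lintegral_rpow_enorm_toReal (by norm_num) (by norm_num)]
  simp only [ENNReal.toReal_ofNat, one_div, enorm_eq_nnnorm]
  have key : (∫⁻ x, (‖f (g⁻¹ * x)‖₊ : ℝ≥0∞) ^ (2 : ℝ) ∂(weightedMeasure G μ))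
      ≤ ENNReal.ofReal C * ∫⁻ x, (‖f x‖₊ : ℝ≥0∞) ^ (2 : ℝ) ∂(weightedMeasure G μ) := by
    rw [wm_translate μ g (fun y => (‖f y‖₊ : ℝ≥0∞) ^ (2 : ℝ)), wm_lintegral,
      ← ENNReal.tsum_mul_left]
    refine ENNReal.tsum_le_tsum fun y => ?_
    rw [← mul_assoc, mul_comm (ENNReal.ofReal C), mul_assoc]
    refine mul_le_mul_right ?_ _
    rw [← ENNReal.ofReal_mul hC0]
    exact ENNReal.ofReal_le_ofReal (hC y)
  calc (∫⁻ x, (‖f (g⁻¹ * x)‖₊ : ℝ≥0∞) ^ (2 : ℝ) ∂(weightedMeasure G μ)) ^ (2 : ℝ)⁻¹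
      ≤ (ENNReal.ofReal C * ∫⁻ x, (‖f x‖₊ : ℝ≥0∞) ^ (2 : ℝ) ∂(weightedMeasure G μ)) ^ (2 : ℝ)⁻¹ :=
        ENNReal.rpow_le_rpow key (by norm_num)
    _ = ENNReal.ofReal C ^ (2 : ℝ)⁻¹ *
        (∫⁻ x, (‖f x‖₊ : ℝ≥0∞) ^ (2 : ℝ) ∂(weightedMeasure G μ)) ^ (2 : ℝ)⁻¹ :=
        ENNReal.mul_rpow_of_nonneg _ _ (by norm_num)

lemma wm_translate_memℒp (h_pos : ∀ g : G, 0 < μ g)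
    (h_mod : ∀ g : G, ∃ C : ℝ, ∀ x : G, μ (g⁻¹ * x) / μ x ≤ C) (g : G) {f : G → ℝ}
    (hf : MemLp f 2 (weightedMeasure G μ)) :
    MemLp (fun x => f (g⁻¹ * x)) 2 (weightedMeasure G μ) := by
  obtain ⟨C, hC0, hC⟩ := wm_mod μ h_pos h_mod g
  refine ⟨Measurable.of_discrete.aestronglyMeasurable, ?_⟩
  refine lt_of_le_of_lt (wm_translate_eLpNorm μ g hC0 hC f) ?_
  exact ENNReal.mul_lt_top
    (ENNReal.rpow_lt_top_of_nonneg (by norm_num) ENNReal.ofReal_ne_top) hf.2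

end Aux

section Ops

variable {G : Type} [Group G] [Countable G] [MeasurableSpace G] [DiscreteMeasurableSpace G]
  (μ : G → ℝ)

lemma Lp_funext (h_pos : ∀ g : G, 0 < μ g) {f g : Lp ℝ 2 (weightedMeasure G μ)}
    (h : ⇑f = ⇑g) : f = g :=
  Lp.ext (h ▸ Filter.EventuallyEq.rfl)

noncomputable def transLp (h_pos : ∀ g : G, 0 < μ g)
    (h_mod : ∀ g : G, ∃ C : ℝ, ∀ x : G, μ (g⁻¹ * x) / μ x ≤ C) (g : G) :
    Lp ℝ 2 (weightedMeasure G μ) →L[ℝ] Lp ℝ 2 (weightedMeasure G μ) :=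
  LinearMap.mkContinuousOfExistsBound
    { toFun := fun f => MemLp.toLp _ (wm_translate_memℒp μ h_pos h_mod g (Lp.memLp f))
      map_add' := fun f f' => by
        have hadd : ⇑(f + f') = ⇑f + ⇑f' := wm_funext μ h_pos (Lp.coeFn_add f f')
        rw [← MemLp.toLp_add]
        exact MemLp.toLp_congr _ _ (Filter.Eventually.of_forall fun x => by rw [hadd]; rfl)
      map_smul' := fun r f => by
        have hs : ⇑(r • f) = r • ⇑f := wm_funext μ h_pos (Lp.coeFn_smul r f)
        rw [RingHom.id_apply, ← MemLp.toLp_const_smul]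
        exact MemLp.toLp_congr
          (wm_translate_memℒp μ h_pos h_mod g (Lp.memLp (r • f)))
          ((wm_translate_memℒp μ h_pos h_mod g (Lp.memLp f)).const_smul r)
          (Filter.Eventually.of_forall fun x => by rw [hs]; rfl) }
    (by
      obtain ⟨C, hC0, hC⟩ := wm_mod μ h_pos h_mod g
      refine ⟨(ENNReal.ofReal C ^ (2 : ℝ)⁻¹).toReal, fun f => ?_⟩
      have key : ‖MemLp.toLp (fun x => f (g⁻¹ * x))
          (wm_translate_memℒp μ h_pos h_mod g (Lp.memLp f))‖
          ≤ (ENNReal.ofReal C ^ (2 : ℝ)⁻¹).toReal * ‖f‖ := by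
        rw [Lp.norm_toLp, Lp.norm_def, ← ENNReal.toReal_mul]
        refine ENNReal.toReal_mono ?_ (wm_translate_eLpNorm μ g hC0 hC f)
        exact ENNReal.mul_ne_top
          (ENNReal.rpow_ne_top_of_nonneg (by norm_num) ENNReal.ofReal_ne_top)
          (Lp.memLp f).2.ne
      exact key)

lemma transLp_coeFn (h_pos : ∀ g : G, 0 < μ g)
    (h_mod : ∀ g : G, ∃ C : ℝ, ∀ x : G, μ (g⁻¹ * x) / μ x ≤ C) (g : G)
    (f : Lp ℝ 2 (weightedMeasure G μ)) :
    ⇑(transLp μ h_pos h_mod g f) = fun x => f (g⁻¹ * x) :=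
  wm_funext μ h_pos
    (MemLp.coeFn_toLp (wm_translate_memℒp μ h_pos h_mod g (Lp.memLp f)))

lemma mem_constantLine_iff (h_pos : ∀ g : G, 0 < μ g) (h_sum : ∑' g : G, μ g = 1)
    {f : Lp ℝ 2 (weightedMeasure G μ)} :
    f ∈ constantLine G μ ↔ ∃ r : ℝ, ⇑f = fun _ => r := by
  haveI := wm_prob μ h_pos h_sum
  have hone : MemLp (fun _ : G => (1 : ℝ)) 2 (weightedMeasure G μ) := memLp_const 1
  have hset : {f : Lp ℝ 2 (weightedMeasure G μ) |
      ⇑f =ᵐ[weightedMeasure G μ] fun _ => (1 : ℝ)} = {hone.toLp _} := by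
    ext u
    simp only [Set.mem_setOf_eq, Set.mem_singleton_iff]
    constructor
    · intro h
      exact Lp.ext (h.trans hone.coeFn_toLp.symm)
    · rintro rfl
      exact hone.coeFn_toLp
  rw [constantLine, hset]
  constructor
  · intro hf
    obtain ⟨a, ha⟩ := Submodule.mem_span_singleton.1 hf
    refine ⟨a, ?_⟩
    rw [← ha]
    have h1 : ⇑(a • hone.toLp _) = a • ⇑(hone.toLp _) :=
      wm_funext μ h_pos (Lp.coeFn_smul a _)
    have h2 : ⇑(hone.toLp _) = fun _ : G => (1 : ℝ) := wm_funext μ h_pos hone.coeFn_toLp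
    rw [h1, h2]
    funext x
    simp
  · rintro ⟨r, hr⟩
    refine Submodule.mem_span_singleton.2 ⟨r, ?_⟩
    apply Lp_funext μ h_pos
    have h1 : ⇑(r • hone.toLp _) = r • ⇑(hone.toLp _) :=
      wm_funext μ h_pos (Lp.coeFn_smul r _)
    have h2 : ⇑(hone.toLp _) = fun _ : G => (1 : ℝ) := wm_funext μ h_pos hone.coeFn_toLp
    rw [h1, h2, hr]
    funext x
    simp

lemma transLp_maps (h_pos : ∀ g : G, 0 < μ g)
    (h_mod : ∀ g : G, ∃ C : ℝ, ∀ x : G, μ (g⁻¹ * x) / μ x ≤ C) (g : G) :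
    constantLine G μ ≤
      (constantLine G μ).comap (transLp μ h_pos h_mod g).toLinearMap := by
  conv_lhs => rw [constantLine]
  rw [Submodule.span_le]
  intro f hf
  simp only [Set.mem_setOf_eq] at hf
  have hf' : ⇑f = fun _ => (1 : ℝ) := wm_funext μ h_pos hf
  refine Submodule.mem_comap.2 (Submodule.subset_span ?_)
  show ⇑(transLp μ h_pos h_mod g f) =ᵐ[weightedMeasure G μ] fun _ => (1 : ℝ)
  rw [transLp_coeFn μ h_pos h_mod g f, hf']

noncomputable def transQ (h_pos : ∀ g : G, 0 < μ g)
    (h_mod : ∀ g : G, ∃ C : ℝ, ∀ x : G, μ (g⁻¹ * x) / μ x ≤ C) (g : G) :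
    (Lp ℝ 2 (weightedMeasure G μ) ⧸ constantLine G μ) →L[ℝ]
      (Lp ℝ 2 (weightedMeasure G μ) ⧸ constantLine G μ) :=
  LinearMap.mkContinuousOfExistsBound
    (Submodule.mapQ _ _ (transLp μ h_pos h_mod g).toLinearMap (transLp_maps μ h_pos h_mod g))
    (by
      set T := transLp μ h_pos h_mod g with hT
      refine ⟨‖T‖ + 1, fun v => ?_⟩
      refine le_of_forall_pos_le_add fun ε hε => ?_
      have hT1 : (0 : ℝ) < ‖T‖ + 1 := add_pos_of_nonneg_of_pos (norm_nonneg T) one_pos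
      obtain ⟨u, hu, hlt⟩ := Submodule.Quotient.norm_mk_lt v (div_pos hε hT1)
      have h1 : Submodule.mapQ (constantLine G μ) (constantLine G μ) T.toLinearMap
          (transLp_maps μ h_pos h_mod g) v = Submodule.Quotient.mk (T u) := by
        rw [← hu, Submodule.mapQ_apply]
        rfl
      rw [h1]
      calc ‖(Submodule.Quotient.mk (T u) :
            Lp ℝ 2 (weightedMeasure G μ) ⧸ constantLine G μ)‖
          ≤ ‖T u‖ := Submodule.Quotient.norm_mk_le _ _
        _ ≤ ‖T‖ * ‖u‖ := T.le_opNorm u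
        _ ≤ (‖T‖ + 1) * ‖u‖ := by nlinarith [norm_nonneg u, norm_nonneg T]
        _ ≤ (‖T‖ + 1) * (‖v‖ + ε / (‖T‖ + 1)) := by
            have := norm_nonneg T
            nlinarith [hlt.le]
        _ = (‖T‖ + 1) * ‖v‖ + ε := by
            rw [mul_add, mul_div_cancel₀ _ (ne_of_gt hT1)]
        )

lemma transQ_mk (h_pos : ∀ g : G, 0 < μ g)
    (h_mod : ∀ g : G, ∃ C : ℝ, ∀ x : G, μ (g⁻¹ * x) / μ x ≤ C) (g : G)
    (u : Lp ℝ 2 (weightedMeasure G μ)) :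
    transQ μ h_pos h_mod g ((constantLine G μ).mkQ u)
      = (constantLine G μ).mkQ (transLp μ h_pos h_mod g u) := by
  simp only [transQ, LinearMap.mkContinuousOfExistsBound_apply, Submodule.mkQ_apply,
    Submodule.mapQ_apply]
  rfl

end Ops

/-- Let `G` be a countable group and `μ` a probability measure on `G` with `μ(g) > 0`
for all `g`, such that for every `g` the quantity `sup_x μ(g⁻¹x)/μ(x)` is finite.
Let `V = ℓ²(G, μ)/ℝ·1`.  Let `c : G × G → ℝ` be a bounded `2`-cocycle which is not a
coboundary.  Then the translation operators `λ(g)` induced on `V` by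
`(λ(g)f)(x) = f(g⁻¹x)` are well-defined bounded invertible operators, the map
`g ↦ (v ↦ λ(g)v + b(g))`, where `b(g)` is the class of `x ↦ c(x⁻¹, g)`, is an action
of `G` on `V` by continuous affine transformations, the orbit of `0` is bounded, and
the action has no fixed point. -/
theorem initial_construction
    (G : Type) [Group G] [Countable G] [MeasurableSpace G] [DiscreteMeasurableSpace G]
    (μ : G → ℝ) (h_pos : ∀ g : G, 0 < μ g) (h_sum : ∑' g : G, μ g = 1)
    (h_mod : ∀ g : G, ∃ C : ℝ, ∀ x : G, μ (g⁻¹ * x) / μ x ≤ C)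
    (c : G → G → ℝ) (h_bdd : ∃ M : ℝ, ∀ x y : G, |c x y| ≤ M)
    (h_cocycle : ∀ x y z : G, c y z - c (x * y) z + c x (y * z) - c x y = 0)
    (h_nontrivial : ¬ ∃ φ : G → ℝ, ∀ x y : G, c x y = φ y - φ (x * y) + φ x) :
    ∃ (lam : G →
        ((Lp ℝ 2 (weightedMeasure G μ) ⧸ constantLine G μ) →L[ℝ]
          (Lp ℝ 2 (weightedMeasure G μ) ⧸ constantLine G μ)))
      (b : G → (Lp ℝ 2 (weightedMeasure G μ) ⧸ constantLine G μ)),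
      -- the translation of an ℓ² function is ℓ² ...
      (∀ (g : G) (f : G → ℝ), MemLp f 2 (weightedMeasure G μ) →
        MemLp (fun x => f (g⁻¹ * x)) 2 (weightedMeasure G μ)) ∧
      -- ... and λ(g) is induced by (λ(g)f)(x) = f(g⁻¹x)
      (∀ (g : G) (f : G → ℝ) (hf : MemLp f 2 (weightedMeasure G μ))
          (hgf : MemLp (fun x => f (g⁻¹ * x)) 2 (weightedMeasure G μ)),
        lam g ((constantLine G μ).mkQ (MemLp.toLp f hf)) =
          (constantLine G μ).mkQ (MemLp.toLp (fun x => f (g⁻¹ * x)) hgf)) ∧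
      -- λ is a homomorphism into the invertible operators
      lam 1 = ContinuousLinearMap.id ℝ _ ∧
      (∀ g h : G, lam (g * h) = (lam g).comp (lam h)) ∧
      -- b(g) is the class of x ↦ c(x⁻¹, g)
      (∀ g : G, MemLp (fun x : G => c x⁻¹ g) 2 (weightedMeasure G μ)) ∧
      (∀ (g : G) (hcg : MemLp (fun x : G => c x⁻¹ g) 2 (weightedMeasure G μ)),
        b g = (constantLine G μ).mkQ (MemLp.toLp (fun x : G => c x⁻¹ g) hcg)) ∧
      -- g ↦ (v ↦ λ(g)v + b(g)) is an action by (continuous) affine transformations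
      (∀ g h : G, b (g * h) = lam g (b h) + b g) ∧
      -- the orbit of 0 is bounded
      Bornology.IsBounded (Set.range fun g : G => lam g 0 + b g) ∧
      -- the action has no fixed point
      ¬ ∃ v, ∀ g : G, lam g v + b g = v := by
  haveI := wm_prob μ h_pos h_sum
  obtain ⟨M, hM⟩ := h_bdd
  have hM0 : 0 ≤ M := le_trans (abs_nonneg _) (hM 1 1)
  have memB : ∀ g : G, MemLp (fun x : G => c x⁻¹ g) 2 (weightedMeasure G μ) := fun g =>
    MemLp.of_bound Measurable.of_discrete.aestronglyMeasurable M
      (Filter.Eventually.of_forall fun x => by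
        simpa [Real.norm_eq_abs] using hM x⁻¹ g)
  refine ⟨fun g => transQ μ h_pos h_mod g,
    fun g => (constantLine G μ).mkQ (MemLp.toLp _ (memB g)),
    fun g f hf => wm_translate_memℒp μ h_pos h_mod g hf,
    ?_, ?_, ?_, memB, fun g hcg => rfl, ?_, ?_, ?_⟩
  · -- induced by translation
    intro g f hf hgf
    beta_reduce
    rw [transQ_mk]
    congr 1
    apply Lp_funext μ h_pos
    rw [transLp_coeFn]
    have h1 : ⇑(MemLp.toLp f hf) = f := wm_funext μ h_pos hf.coeFn_toLp
    have h2 : ⇑(MemLp.toLp (fun x => f (g⁻¹ * x)) hgf) = fun x => f (g⁻¹ * x) :=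
      wm_funext μ h_pos hgf.coeFn_toLp
    rw [h1, h2]
  · -- lam 1 = id
    beta_reduce
    ext v
    obtain ⟨u, rfl⟩ := Submodule.mkQ_surjective _ v
    rw [transQ_mk]
    have hu : transLp μ h_pos h_mod 1 u = u := by
      apply Lp_funext μ h_pos
      rw [transLp_coeFn]
      funext x
      simp
    rw [hu]
    rfl
  · -- homomorphism
    intro g h
    beta_reduce
    ext v
    obtain ⟨u, rfl⟩ := Submodule.mkQ_surjective _ v
    rw [ContinuousLinearMap.comp_apply, transQ_mk, transQ_mk, transQ_mk]
    congr 1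
    apply Lp_funext μ h_pos
    simp only [transLp_coeFn]
    funext x
    rw [mul_inv_rev, mul_assoc]
  · -- affine cocycle property of b
    intro g h
    beta_reduce
    rw [transQ_mk, ← map_add]
    simp only [Submodule.mkQ_apply]
    rw [Submodule.Quotient.eq]
    refine (mem_constantLine_iff μ h_pos h_sum).2 ⟨-(c g h), ?_⟩
    have es : ⇑(MemLp.toLp _ (memB (g * h)) -
          (transLp μ h_pos h_mod g (MemLp.toLp _ (memB h)) + MemLp.toLp _ (memB g)))
        = ⇑(MemLp.toLp _ (memB (g * h))) -
          ⇑(transLp μ h_pos h_mod g (MemLp.toLp _ (memB h)) + MemLp.toLp _ (memB g)) :=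
      wm_funext μ h_pos (Lp.coeFn_sub _ _)
    have ea : ⇑(transLp μ h_pos h_mod g (MemLp.toLp _ (memB h)) + MemLp.toLp _ (memB g))
        = ⇑(transLp μ h_pos h_mod g (MemLp.toLp _ (memB h))) + ⇑(MemLp.toLp _ (memB g)) :=
      wm_funext μ h_pos (Lp.coeFn_add _ _)
    have e1 : ⇑(MemLp.toLp _ (memB (g * h))) = fun x : G => c x⁻¹ (g * h) :=
      wm_funext μ h_pos (memB (g * h)).coeFn_toLp
    have e2 : ⇑(MemLp.toLp _ (memB h)) = fun x : G => c x⁻¹ h :=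
      wm_funext μ h_pos (memB h).coeFn_toLp
    have e3 : ⇑(MemLp.toLp _ (memB g)) = fun x : G => c x⁻¹ g :=
      wm_funext μ h_pos (memB g).coeFn_toLp
    rw [es, ea, e1, e3, transLp_coeFn, e2]
    funext x
    have := h_cocycle x⁻¹ g h
    simp only [Pi.sub_apply, Pi.add_apply, mul_inv_rev, inv_inv]
    linarith
  · -- bounded orbit
    refine isBounded_iff_forall_norm_le.2 ⟨M, ?_⟩
    rintro x ⟨g, rfl⟩
    beta_reduce
    simp only [map_zero, zero_add]
    have h1 : ‖(constantLine G μ).mkQ (MemLp.toLp _ (memB g))‖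
        ≤ ‖MemLp.toLp _ (memB g)‖ := by
      rw [Submodule.mkQ_apply]
      exact Submodule.Quotient.norm_mk_le _ _
    refine h1.trans ?_
    rw [Lp.norm_toLp]
    refine ENNReal.toReal_le_of_le_ofReal hM0 ?_
    have h2 := eLpNorm_le_of_ae_bound (μ := weightedMeasure G μ) (p := 2)
      (f := fun x : G => c x⁻¹ g) (C := M)
      (Filter.Eventually.of_forall fun x => by simpa [Real.norm_eq_abs] using hM x⁻¹ g)
    simpa [measure_univ] using h2
  · -- no fixed point
    rintro ⟨v, hv⟩
    obtain ⟨F, rfl⟩ := Submodule.mkQ_surjective _ v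
    have key : ∀ g : G, ∃ r : ℝ, ∀ x : G, F (g⁻¹ * x) + c x⁻¹ g - F x = r := by
      intro g
      have h1 : transQ μ h_pos h_mod g ((constantLine G μ).mkQ F) +
          (constantLine G μ).mkQ (MemLp.toLp _ (memB g)) = (constantLine G μ).mkQ F := hv g
      rw [transQ_mk, ← map_add] at h1
      simp only [Submodule.mkQ_apply] at h1
      rw [Submodule.Quotient.eq] at h1
      obtain ⟨r, hr⟩ := (mem_constantLine_iff μ h_pos h_sum).1 h1
      refine ⟨r, fun x => ?_⟩
      have es : ⇑(transLp μ h_pos h_mod g F + MemLp.toLp _ (memB g) - F)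
          = ⇑(transLp μ h_pos h_mod g F + MemLp.toLp _ (memB g)) - ⇑F :=
        wm_funext μ h_pos (Lp.coeFn_sub _ _)
      have ea : ⇑(transLp μ h_pos h_mod g F + MemLp.toLp _ (memB g))
          = ⇑(transLp μ h_pos h_mod g F) + ⇑(MemLp.toLp _ (memB g)) :=
        wm_funext μ h_pos (Lp.coeFn_add _ _)
      have eb : ⇑(MemLp.toLp _ (memB g)) = fun x : G => c x⁻¹ g :=
        wm_funext μ h_pos (memB g).coeFn_toLp
      have hx := congrFun hr x
      rw [es, ea, eb, transLp_coeFn] at hx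
      simpa using hx
    choose α hα using key
    have hkey : ∀ u g : G, c u g = α g + F u⁻¹ - F (g⁻¹ * u⁻¹) := by
      intro u g
      have := hα g u⁻¹
      rw [inv_inv] at this
      linarith
    have hα2 : ∀ y : G, α y = α 1 + F y⁻¹ - F 1⁻¹ := by
      intro y
      have h1 := hkey 1 y
      have h2 := hkey 1 1
      have h3 := h_cocycle 1 1 y
      simp only [inv_one, one_mul, mul_one] at h1 h2 h3 ⊢
      linarith
    refine h_nontrivial ⟨fun u => F u⁻¹ + (α 1 - F 1⁻¹), fun x y => ?_⟩
    have h1 := hkey x y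
    have h2 := hα2 y
    beta_reduce
    rw [mul_inv_rev]
    linarith
end

section
/- The free group F₂ on two generators admits an action on a separable real Hilbert space by continuous affine transformations which has a bounded orbit but no fixed point. -/
/-- A fixed-point-free affine action of `G` on a separable real Hilbert space with a
bounded orbit: the space `V` is a separable real Hilbert space, `ρ` is an action of `G`
on `V` by continuous affine transformations, some orbit is bounded, and there is no
fixed point. -/
structure BadAffineAction (G : Type*) [Group G] where
  V : Type
  [instNormedAddCommGroup : NormedAddCommGroup V]
  [instInnerProductSpace : InnerProductSpace ℝ V]
  [instCompleteSpace : CompleteSpace V]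
  [instSeparableSpace : TopologicalSpace.SeparableSpace V]
  ρ : G → V →ᴬ[ℝ] V
  map_one : ∀ v, ρ 1 v = v
  map_mul : ∀ g h v, ρ (g * h) v = ρ g (ρ h v)
  bounded_orbit : ∃ v : V, Bornology.IsBounded (Set.range fun g => ρ g v)
  no_fixed_point : ¬ ∃ v : V, ∀ g, ρ g v = v


open scoped ENNReal
noncomputable section
namespace BadAff

abbrev F : Type := FreeGroup (Fin 2)
abbrev V : Type := lp (fun _ : F => ℝ) 2

-- instances check
example : NormedAddCommGroup V := inferInstance
example : InnerProductSpace ℝ V := inferInstance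
example : CompleteSpace V := inferInstance
example : DecidableEq F := inferInstance
example : Fact ((1:ℝ≥0∞) ≤ 2) := inferInstance

def q : ℝ := 3/4
lemma q_pos : 0 < q := by norm_num [q]
lemma q_lt_one : q < 1 := by norm_num [q]
lemma q_ne : q ≠ 0 := q_pos.ne'
lemma q_le_one : q ≤ 1 := q_lt_one.le

def ν (g : F) : ℤ := (FreeGroup.norm g : ℤ)

lemma ν_mul_le (g h : F) : ν (g * h) ≤ ν g + ν h := by
  have := FreeGroup.norm_mul_le g h
  simpa [ν] using Int.ofNat_le.mpr this

lemma ν_inv (g : F) : ν g⁻¹ = ν g := by simp [ν, FreeGroup.norm_inv_eq]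

/-- weight -/
def w (g x : F) : ℝ := q ^ (ν x - ν (g⁻¹ * x))

lemma w_pos (g x : F) : 0 < w g x := zpow_pos q_pos _

lemma w_one (x : F) : w 1 x = 1 := by simp [w]

lemma w_cocycle (g h x : F) : w (g * h) x = w g x * w h (g⁻¹ * x) := by
  have : (g * h)⁻¹ * x = h⁻¹ * (g⁻¹ * x) := by group
  rw [w, w, w, this, ← zpow_add₀ q_ne]
  ring_nf

lemma abs_νdiff_le (g x : F) : |ν x - ν (g⁻¹ * x)| ≤ ν g := by
  rw [abs_le]
  constructor
  · have h1 : ν (g⁻¹ * x) ≤ ν g⁻¹ + ν x := ν_mul_le _ _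
    rw [ν_inv] at h1; omega
  · have h2 : ν x = ν (g * (g⁻¹ * x)) := by group
    have h3 : ν (g * (g⁻¹ * x)) ≤ ν g + ν (g⁻¹ * x) := ν_mul_le _ _
    omega

lemma w_le (g x : F) : w g x ≤ q ^ (-(ν g)) := by
  apply zpow_le_zpow_right_of_le_one₀ q_pos q_le_one
  have := abs_νdiff_le g x
  rw [abs_le] at this; omega


lemma toReal_two : (2 : ℝ≥0∞).toReal = (2:ℝ) := by norm_num
lemma toReal_two_pos : (0:ℝ) < (2 : ℝ≥0∞).toReal := by norm_num

lemma summable_sq (f : V) : Summable (fun x : F => ‖f x‖ ^ (2:ℝ)) := by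
  have h := lp.memℓp f
  rw [memℓp_gen_iff toReal_two_pos] at h
  simpa [toReal_two] using h

def Tfun (g : F) (f : V) : ∀ _ : F, ℝ := fun x => w g x * f (g⁻¹ * x)

lemma norm_w (g x : F) : ‖w g x‖ = w g x := Real.norm_of_nonneg (w_pos g x).le

lemma Tfun_term_le (g : F) (f : V) (x : F) :
    ‖Tfun g f x‖ ^ (2:ℝ) ≤ (q ^ (-(ν g))) ^ (2:ℝ) * ‖f (g⁻¹ * x)‖ ^ (2:ℝ) := by
  rw [Tfun, norm_mul, Real.mul_rpow (norm_nonneg _) (norm_nonneg _)]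
  have hw : ‖w g x‖ ≤ q ^ (-(ν g)) := by rw [norm_w]; exact w_le g x
  exact mul_le_mul_of_nonneg_right
    (Real.rpow_le_rpow (norm_nonneg _) hw (by norm_num)) (by positivity)

lemma summable_shift (g : F) (f : V) :
    Summable (fun x : F => ‖f (g⁻¹ * x)‖ ^ (2:ℝ)) :=
  ((Equiv.mulLeft g⁻¹).summable_iff (f := fun x : F => ‖f x‖ ^ (2:ℝ))).2 (summable_sq f)

lemma memℓp_T (g : F) (f : V) : Memℓp (Tfun g f) 2 := by
  apply memℓp_gen
  have hs : Summable (fun x : F => (q ^ (-(ν g))) ^ (2:ℝ) * ‖f (g⁻¹ * x)‖ ^ (2:ℝ)) :=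
    (summable_shift g f).mul_left _
  apply Summable.of_nonneg_of_le (fun x => by positivity) (fun x => ?_) hs
  rw [toReal_two]
  exact Tfun_term_le g f x

def TlinAux (g : F) : V →ₗ[ℝ] V where
  toFun f := ⟨Tfun g f, memℓp_T g f⟩
  map_add' f f' := by
    apply lp.ext
    funext x
    show Tfun g (f + f') x = Tfun g f x + Tfun g f' x
    simp only [Tfun, lp.coeFn_add, Pi.add_apply]
    ring
  map_smul' c f := by
    apply lp.ext
    funext x
    show Tfun g (c • f) x = c * Tfun g f x
    simp only [Tfun, lp.coeFn_smul, Pi.smul_apply, smul_eq_mul]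
    ring

lemma TlinAux_norm (g : F) (f : V) : ‖TlinAux g f‖ ≤ q ^ (-(ν g)) * ‖f‖ := by
  have hC : (0:ℝ) < q ^ (-(ν g)) := zpow_pos q_pos _
  have h1 : ‖TlinAux g f‖ ^ (2:ℝ) ≤ (q ^ (-(ν g)) * ‖f‖) ^ (2:ℝ) := by
    rw [show ‖TlinAux g f‖ ^ (2:ℝ) = ‖TlinAux g f‖ ^ (2:ℝ≥0∞).toReal by rw [toReal_two]]
    rw [lp.norm_rpow_eq_tsum toReal_two_pos]
    have hsum : ∀ x : F, ‖(TlinAux g f) x‖ ^ (2:ℝ≥0∞).toReal ≤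
        (q ^ (-(ν g))) ^ (2:ℝ) * ‖f (g⁻¹ * x)‖ ^ (2:ℝ) := by
      intro x
      rw [toReal_two]
      exact Tfun_term_le g f x
    calc ∑' x : F, ‖(TlinAux g f) x‖ ^ (2:ℝ≥0∞).toReal
        ≤ ∑' x : F, (q ^ (-(ν g))) ^ (2:ℝ) * ‖f (g⁻¹ * x)‖ ^ (2:ℝ) := by
          apply Summable.tsum_le_tsum hsum
          · apply Summable.of_nonneg_of_le (fun x => by positivity) hsum
            exact (summable_shift g f).mul_left _
          · exact (summable_shift g f).mul_left _
      _ = (q ^ (-(ν g))) ^ (2:ℝ) * ∑' x : F, ‖f (g⁻¹ * x)‖ ^ (2:ℝ) := tsum_mul_left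
      _ = (q ^ (-(ν g))) ^ (2:ℝ) * ∑' x : F, ‖f x‖ ^ (2:ℝ) := by
          congr 1
          exact (Equiv.mulLeft g⁻¹).tsum_eq (fun x : F => ‖f x‖ ^ (2:ℝ))
      _ = (q ^ (-(ν g))) ^ (2:ℝ) * ‖f‖ ^ (2:ℝ) := by
          rw [show ‖f‖ ^ (2:ℝ) = ‖f‖ ^ (2:ℝ≥0∞).toReal by rw [toReal_two],
            lp.norm_rpow_eq_tsum toReal_two_pos]
          simp [toReal_two]
      _ = (q ^ (-(ν g)) * ‖f‖) ^ (2:ℝ) := by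
          rw [Real.mul_rpow hC.le (norm_nonneg _)]
  have ha : (0:ℝ) ≤ ‖TlinAux g f‖ := norm_nonneg _
  have hb : (0:ℝ) ≤ q ^ (-(ν g)) * ‖f‖ := by positivity
  have h1' : ‖TlinAux g f‖ ^ (2:ℕ) ≤ (q ^ (-(ν g)) * ‖f‖) ^ (2:ℕ) := by
    have e1 := Real.rpow_natCast (‖TlinAux g f‖) 2
    have e2 := Real.rpow_natCast (q ^ (-(ν g)) * ‖f‖) 2
    push_cast at e1 e2
    rw [← e1, ← e2]
    exact h1
  exact le_of_pow_le_pow_left₀ two_ne_zero hb h1'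

def Tlin (g : F) : V →L[ℝ] V :=
  LinearMap.mkContinuous (TlinAux g) (q ^ (-(ν g))) (TlinAux_norm g)

lemma Tlin_apply (g : F) (f : V) (x : F) : Tlin g f x = w g x * f (g⁻¹ * x) := rfl

lemma Tlin_mul_apply (g h : F) (f : V) : Tlin g (Tlin h f) = Tlin (g * h) f := by
  apply lp.ext
  funext x
  show w g x * (w h (g⁻¹ * x) * f (h⁻¹ * (g⁻¹ * x))) = w (g*h) x * f ((g*h)⁻¹ * x)
  rw [w_cocycle g h x]
  have : (g * h)⁻¹ * x = h⁻¹ * (g⁻¹ * x) := by group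
  rw [this]; ring

lemma Tlin_one_apply (f : V) : Tlin 1 f = f := by
  apply lp.ext
  funext x
  show w 1 x * f (1⁻¹ * x) = f x
  rw [w_one]; simp


/-- delta at identity -/
def δe : V := lp.single 2 (1 : F) (1:ℝ)

lemma single_norm (x : F) (c : ℝ) : ‖(lp.single 2 x c : V)‖ = ‖c‖ := by
  have h : ‖(lp.single 2 x c : V)‖ ^ (2:ℝ≥0∞).toReal
      = ∑' y : F, ‖(lp.single 2 x c : V) y‖ ^ (2:ℝ≥0∞).toReal :=
    lp.norm_rpow_eq_tsum toReal_two_pos _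
  have h2 : (∑' y : F, ‖(lp.single 2 x c : V) y‖ ^ (2:ℝ≥0∞).toReal)
      = ‖c‖ ^ (2:ℝ≥0∞).toReal := by
    rw [tsum_eq_single x]
    · rw [lp.single_apply_self]
    · intro y hy
      rw [lp.single_apply_ne (E := fun _ : F => ℝ) 2 x c hy]
      simp only [norm_zero]
      rw [Real.zero_rpow toReal_two_pos.ne']
  have h3 : ‖(lp.single 2 x c : V)‖ ^ (2:ℕ) = ‖c‖ ^ (2:ℕ) := by
    have e1 := Real.rpow_natCast (‖(lp.single 2 x c : V)‖) 2
    have e2 := Real.rpow_natCast (‖c‖) 2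
    push_cast at e1 e2
    rw [← e1, ← e2, show ((2:ℝ)) = (2 : ℝ≥0∞).toReal by norm_num]
    rw [h, h2]
  have ha : (0:ℝ) ≤ ‖(lp.single 2 x c : V)‖ := norm_nonneg _
  have hb : (0:ℝ) ≤ ‖c‖ := norm_nonneg _
  nlinarith [h3, ha, hb]

lemma Tlin_single (g x : F) (c : ℝ) :
    Tlin g (lp.single 2 x c) = lp.single 2 (g*x) (w g (g*x) * c) := by
  apply lp.ext
  funext y
  show w g y * (lp.single 2 x c : V) (g⁻¹ * y) = (lp.single 2 (g*x) (w g (g*x) * c) : V) y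
  by_cases hy : y = g * x
  · subst hy
    rw [lp.single_apply_self]
    have : g⁻¹ * (g * x) = x := by group
    rw [this, lp.single_apply_self]
  · have hx : g⁻¹ * y ≠ x := by
      intro h
      apply hy
      rw [← h]; group
    rw [lp.single_apply_ne (E := fun _ : F => ℝ) 2 x c hx,
      lp.single_apply_ne (E := fun _ : F => ℝ) 2 (g*x) (w g (g*x) * c) hy, mul_zero]

lemma Tlin_norm_δe (g : F) : ‖Tlin g δe‖ = q ^ (ν g) := by
  rw [δe, Tlin_single, single_norm]
  have h1 : g * 1 = g := mul_one g
  rw [h1, mul_one, w]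
  have : g⁻¹ * g = 1 := inv_mul_cancel g
  rw [this]
  have hν1 : ν (1 : F) = 0 := by simp [ν, FreeGroup.norm_one]
  rw [hν1, sub_zero, Real.norm_of_nonneg (zpow_pos q_pos _).le]

/-- invertible operators -/
def Tunit (g : F) : (V →L[ℝ] V)ˣ where
  val := Tlin g
  inv := Tlin g⁻¹
  val_inv := by
    ext f : 1
    rw [ContinuousLinearMap.mul_apply, ContinuousLinearMap.one_apply,
      Tlin_mul_apply, mul_inv_cancel, Tlin_one_apply]
  inv_val := by
    ext f : 1
    rw [ContinuousLinearMap.mul_apply, ContinuousLinearMap.one_apply,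
      Tlin_mul_apply, inv_mul_cancel, Tlin_one_apply]

/-- affine pairs -/
@[ext]
structure AffT where
  L : (V →L[ℝ] V)ˣ
  b : V

instance : One AffT := ⟨⟨1, 0⟩⟩
instance : Mul AffT := ⟨fun A B => ⟨A.L * B.L, A.b + A.L.val (B.b)⟩⟩
instance : Inv AffT := ⟨fun A => ⟨A.L⁻¹, -(A.L⁻¹.val A.b)⟩⟩

@[simp] lemma AffT_mul_L (A B : AffT) : (A * B).L = A.L * B.L := rfl
@[simp] lemma AffT_mul_b (A B : AffT) : (A * B).b = A.b + A.L.val (B.b) := rfl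
@[simp] lemma AffT_one_L : (1 : AffT).L = 1 := rfl
@[simp] lemma AffT_one_b : (1 : AffT).b = 0 := rfl
@[simp] lemma AffT_inv_L (A : AffT) : (A⁻¹).L = A.L⁻¹ := rfl
@[simp] lemma AffT_inv_b (A : AffT) : (A⁻¹).b = -(A.L⁻¹.val A.b) := rfl

instance : Group AffT where
  mul_assoc A B C := by
    ext : 1
    · simp [mul_assoc]
    · simp [mul_add, add_assoc]
  one_mul A := by ext : 1 <;> simp
  mul_one A := by ext : 1 <;> simp
  inv_mul_cancel A := by
    ext : 1
    · simp
    · simp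

def gens (i : Fin 2) : AffT := ⟨Tunit (FreeGroup.of i), δe⟩

def ρ₀ : F →* AffT := FreeGroup.lift gens

def PL : AffT →* (V →L[ℝ] V)ˣ where
  toFun := AffT.L
  map_one' := rfl
  map_mul' _ _ := rfl

def TunitHom : F →* (V →L[ℝ] V)ˣ where
  toFun := Tunit
  map_one' := by
    apply Units.ext
    show Tlin 1 = 1
    ext f : 1
    rw [ContinuousLinearMap.one_apply, Tlin_one_apply]
  map_mul' g h := by
    apply Units.ext
    show Tlin (g * h) = Tlin g * Tlin h
    ext f : 1
    rw [ContinuousLinearMap.mul_apply, Tlin_mul_apply]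

lemma ρ₀_L (g : F) : (ρ₀ g).L = Tunit g := by
  have h : PL.comp ρ₀ = TunitHom := by
    apply FreeGroup.ext_hom
    intro a
    show (ρ₀ (FreeGroup.of a)).L = Tunit (FreeGroup.of a)
    rw [ρ₀, FreeGroup.lift_apply_of]
    rfl
  exact DFunLike.congr_fun h g

/-- the cocycle -/
def B (g : F) : V := (ρ₀ g).b

lemma B_one : B 1 = 0 := by rw [B, map_one]; rfl

lemma B_mul (g h : F) : B (g * h) = B g + Tlin g (B h) := by
  rw [B, map_mul]
  show (ρ₀ g).b + ((ρ₀ g).L).val (ρ₀ h).b = _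
  rw [ρ₀_L g]
  rfl

lemma B_of (i : Fin 2) : B (FreeGroup.of i) = δe := by
  rw [B, ρ₀, FreeGroup.lift_apply_of]
  rfl

lemma B_of_inv (i : Fin 2) : B (FreeGroup.of i)⁻¹ = -(Tlin (FreeGroup.of i)⁻¹ δe) := by
  rw [B, map_inv]
  show -(((ρ₀ (FreeGroup.of i)).L)⁻¹.val (ρ₀ (FreeGroup.of i)).b) = _
  rw [ρ₀_L, ρ₀, FreeGroup.lift_apply_of]
  rfl


open FreeGroup in
lemma red_eq_of_length {L M : List (Fin 2 × Bool)} (h : Red L M)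
    (hlen : M.length = L.length) : M = L := by
  rcases Relation.ReflTransGen.cases_head h with h1 | ⟨L', hstep, hred⟩
  · exact h1.symm
  · exfalso
    have h2 : L'.length + 2 = L.length := FreeGroup.Red.Step.length hstep
    have h3 : M.length ≤ L'.length := FreeGroup.Red.length_le hred
    omega

open FreeGroup in
lemma reduce_prefix {L₁ L₂ : List (Fin 2 × Bool)}
    (h : reduce (L₁ ++ L₂) = L₁ ++ L₂) : reduce L₁ = L₁ := by
  have hr : Red L₁ (reduce L₁) := reduce.red
  have hred2 : Red (L₁ ++ L₂) (reduce L₁ ++ L₂) := Red.append_append hr Red.refl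
  have h2 : reduce (L₁ ++ L₂) = reduce (reduce L₁ ++ L₂) := reduce.eq_of_red hred2
  have h3 : (reduce (reduce L₁ ++ L₂)).length ≤ (reduce L₁).length + L₂.length := by
    have := Red.length_le (reduce.red (L := reduce L₁ ++ L₂))
    simpa using this
  have h4 : (reduce L₁).length ≤ L₁.length := Red.length_le hr
  have h5 : L₁.length + L₂.length ≤ (reduce L₁).length + L₂.length := by
    have := congrArg List.length h
    rw [h2] at this
    simp only [List.length_append] at this ⊢
    omega
  have h6 : (reduce L₁).length = L₁.length := by omega
  exact red_eq_of_length hr h6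

lemma ν_mk_reduced {L : List (Fin 2 × Bool)} (h : FreeGroup.reduce L = L) :
    ν (FreeGroup.mk L) = (L.length : ℤ) := by
  have : (FreeGroup.mk L).toWord = L := by rw [FreeGroup.toWord_mk, h]
  simp [ν, FreeGroup.norm, this]

lemma mk_nil_eq_one : FreeGroup.mk ([] : List (Fin 2 × Bool)) = 1 := by
  have := FreeGroup.toWord_one (α := Fin 2)
  rw [← this, FreeGroup.mk_toWord]

lemma mk_single_true (i : Fin 2) : FreeGroup.mk [(i, true)] = FreeGroup.of i := rfl

lemma mk_single_false (i : Fin 2) : FreeGroup.mk [(i, false)] = (FreeGroup.of i)⁻¹ := by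
  rw [← mk_single_true, FreeGroup.inv_mk]
  rfl

lemma B_bound_aux : ∀ (L : List (Fin 2 × Bool)), FreeGroup.reduce L = L →
    ‖B (FreeGroup.mk L)‖ ≤ ∑ i ∈ Finset.range L.length, q ^ i := by
  intro L
  induction L using List.reverseRecOn with
  | nil =>
    intro _
    rw [mk_nil_eq_one, B_one]
    simp
  | append_singleton L x ih =>
    intro hred
    have hredL : FreeGroup.reduce L = L := reduce_prefix hred
    have hmk : FreeGroup.mk (L ++ [x]) = FreeGroup.mk L * FreeGroup.mk [x] := by
      rw [FreeGroup.mul_mk]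
    obtain ⟨i, b⟩ := x
    have hlen : ν (FreeGroup.mk (L ++ [(i,b)])) = (L.length : ℤ) + 1 := by
      rw [ν_mk_reduced hred]
      simp
    cases b with
    | true =>
      rw [hmk, mk_single_true, B_mul, B_of]
      have hterm : ‖Tlin (FreeGroup.mk L) δe‖ = q ^ L.length := by
        rw [Tlin_norm_δe, ν_mk_reduced hredL, zpow_natCast]
      calc ‖B (FreeGroup.mk L) + Tlin (FreeGroup.mk L) δe‖
          ≤ ‖B (FreeGroup.mk L)‖ + ‖Tlin (FreeGroup.mk L) δe‖ := norm_add_le _ _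
        _ ≤ (∑ i ∈ Finset.range L.length, q ^ i) + q ^ L.length := by
            rw [hterm]
            exact add_le_add (ih hredL) le_rfl
        _ = ∑ i ∈ Finset.range (L ++ [(i,true)]).length, q ^ i := by
            rw [List.length_append, List.length_singleton, Finset.sum_range_succ]
    | false =>
      rw [hmk, mk_single_false, B_mul, B_of_inv, map_neg]
      rw [Tlin_mul_apply]
      have hterm : ‖-(Tlin (FreeGroup.mk L * (FreeGroup.of i)⁻¹) δe)‖ = q ^ (L.length + 1) := by
        rw [norm_neg, Tlin_norm_δe]
        have : FreeGroup.mk L * (FreeGroup.of i)⁻¹ = FreeGroup.mk (L ++ [(i, false)]) := by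
          rw [← mk_single_false, ← FreeGroup.mul_mk]
        rw [this, ν_mk_reduced hred]
        push_cast
        rw [zpow_natCast]
        simp
      calc ‖B (FreeGroup.mk L) + -(Tlin (FreeGroup.mk L * (FreeGroup.of i)⁻¹) δe)‖
          ≤ ‖B (FreeGroup.mk L)‖ + ‖-(Tlin (FreeGroup.mk L * (FreeGroup.of i)⁻¹) δe)‖ :=
            norm_add_le _ _
        _ ≤ (∑ i ∈ Finset.range L.length, q ^ i) + q ^ (L.length + 1) := by
            rw [hterm]
            exact add_le_add (ih hredL) le_rfl
        _ ≤ (∑ i ∈ Finset.range L.length, q ^ i) + q ^ L.length := by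
            have : q ^ (L.length + 1) ≤ q ^ L.length :=
              pow_le_pow_of_le_one q_pos.le q_le_one (by omega)
            linarith
        _ = ∑ i ∈ Finset.range (L ++ [(i,false)]).length, q ^ i := by
            rw [List.length_append, List.length_singleton, Finset.sum_range_succ]

lemma geom_le_four (n : ℕ) : (∑ i ∈ Finset.range n, q ^ i) ≤ 4 := by
  have hq : (q:ℝ) ≠ 1 := by norm_num [q]
  rw [geom_sum_eq hq]
  have h1 : (0:ℝ) ≤ q ^ n := pow_nonneg q_pos.le n
  have h2 : q ^ n ≤ 1 := pow_le_one₀ q_pos.le q_le_one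
  have : q - 1 = -(1/4) := by norm_num [q]
  rw [this]
  have : q ^n - 1 ≤ 0 := by linarith
  rw [div_le_iff_of_neg (by norm_num : (-(1/4):ℝ) < 0)]
  linarith

lemma B_bound (g : F) : ‖B g‖ ≤ 4 := by
  have h := B_bound_aux g.toWord (FreeGroup.reduce_toWord g)
  rw [FreeGroup.mk_toWord] at h
  exact h.trans (geom_le_four _)


/-- the affine action -/
def ρA (g : F) : V →ᴬ[ℝ] V where
  toAffineMap :=
    { toFun := fun v => Tlin g v + B g
      linear := (Tlin g : V →ₗ[ℝ] V)
      map_vadd' := by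
        intro p v
        show Tlin g (v + p) + B g = Tlin g v + (Tlin g p + B g)
        rw [map_add, add_assoc] }
  cont := ((Tlin g).continuous.add continuous_const)

lemma ρA_apply (g : F) (v : V) : ρA g v = Tlin g v + B g := rfl

lemma ρA_one (v : V) : ρA 1 v = v := by
  rw [ρA_apply, Tlin_one_apply, B_one, add_zero]

lemma ρA_mul (g h : F) (v : V) : ρA (g * h) v = ρA g (ρA h v) := by
  rw [ρA_apply, ρA_apply, ρA_apply, ← Tlin_mul_apply, map_add, B_mul]
  abel

lemma ρA_zero (g : F) : ρA g 0 = B g := by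
  rw [ρA_apply, map_zero, zero_add]

lemma orbit_bounded : Bornology.IsBounded (Set.range fun g : F => ρA g 0) := by
  apply Bornology.IsBounded.subset (Metric.isBounded_closedBall (x := (0:V)) (r := 4))
  rintro x ⟨g, rfl⟩
  simp only [Metric.mem_closedBall, dist_zero_right, ρA_zero]
  exact B_bound g

/-! ### positive and negative words -/

lemma reduce_map_const (l : List (Fin 2)) (b : Bool) :
    FreeGroup.reduce (l.map fun i => (i, b)) = l.map fun i => (i, b) := by
  induction l with
  | nil => rfl
  | cons i l ih =>
    rw [List.map_cons, FreeGroup.reduce.cons, ih]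
    cases l with
    | nil => rfl
    | cons j l' => simp

def pos (l : List (Fin 2)) : F := FreeGroup.mk (l.map fun i => (i, true))
def neg (l : List (Fin 2)) : F := FreeGroup.mk (l.map fun i => (i, false))

lemma toWord_pos (l : List (Fin 2)) : (pos l).toWord = l.map fun i => (i, true) := by
  rw [pos, FreeGroup.toWord_mk, reduce_map_const]

lemma toWord_neg (l : List (Fin 2)) : (neg l).toWord = l.map fun i => (i, false) := by
  rw [neg, FreeGroup.toWord_mk, reduce_map_const]

lemma ν_pos (l : List (Fin 2)) : ν (pos l) = (l.length : ℤ) := by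
  simp [ν, FreeGroup.norm, toWord_pos]

lemma ν_neg (l : List (Fin 2)) : ν (neg l) = (l.length : ℤ) := by
  simp [ν, FreeGroup.norm, toWord_neg]

lemma pos_injective : Function.Injective pos := by
  intro l l' h
  have h2 := congrArg FreeGroup.toWord h
  rw [toWord_pos, toWord_pos] at h2
  exact List.map_injective_iff.2 (fun a b hab => (Prod.mk.injEq _ _ _ _ ▸ hab).1) h2

lemma pos_cons (i : Fin 2) (l : List (Fin 2)) :
    pos (i :: l) = FreeGroup.of i * pos l := by
  rw [pos, pos, List.map_cons]
  rw [show ((i, true) :: l.map fun i => (i, true)) = [(i, true)] ++ l.map (fun i => (i, true)) from rfl]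
  rw [← FreeGroup.mul_mk]
  rfl

lemma neg_cons (i : Fin 2) (l : List (Fin 2)) :
    neg (i :: l) = (FreeGroup.of i)⁻¹ * neg l := by
  rw [neg, neg, List.map_cons]
  rw [show ((i, false) :: l.map fun i => (i, false)) = [(i, false)] ++ l.map (fun i => (i, false)) from rfl]
  rw [← FreeGroup.mul_mk, mk_single_false]

lemma pos_ne_one (i : Fin 2) (l : List (Fin 2)) : pos (i :: l) ≠ 1 := by
  intro h
  have := congrArg FreeGroup.toWord h
  rw [toWord_pos, FreeGroup.toWord_one] at this
  simp at this

lemma neg_ne_one (i : Fin 2) (l : List (Fin 2)) : neg (i :: l) ≠ 1 := by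
  intro h
  have := congrArg FreeGroup.toWord h
  rw [toWord_neg, FreeGroup.toWord_one] at this
  simp at this

lemma δe_apply_ne {x : F} (hx : x ≠ 1) : (δe : V) x = 0 :=
  lp.single_apply_ne (E := fun _ : F => ℝ) 2 1 (1:ℝ) hx

lemma δe_apply_one : (δe : V) 1 = 1 :=
  lp.single_apply_self (E := fun _ : F => ℝ) 2 1 (1:ℝ)

section FixedPoint
variable (v : V) (hv : ∀ g : F, ρA g v = v)

include hv in
lemma coord_eq (i : Fin 2) (x : F) :
    w (FreeGroup.of i) x * v ((FreeGroup.of i)⁻¹ * x) + (δe : V) x = v x := by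
  have h := hv (FreeGroup.of i)
  rw [ρA_apply, B_of] at h
  have h2 := congrArg (fun u : V => (u : ∀ _ : F, ℝ) x) h
  simpa [lp.coeFn_add, Tlin_apply] using h2

include hv in
lemma v_pos_val : ∀ l : List (Fin 2), (v : ∀ _ : F, ℝ) (pos l) = q ^ l.length * v 1 := by
  intro l
  induction l with
  | nil => simp [pos]; rw [mk_nil_eq_one]
  | cons i l ih =>
    have h := coord_eq v hv i (pos (i :: l))
    rw [δe_apply_ne (pos_ne_one i l), add_zero] at h
    have hx : (FreeGroup.of i)⁻¹ * pos (i :: l) = pos l := by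
      rw [pos_cons]; group
    rw [hx] at h
    have hw : w (FreeGroup.of i) (pos (i :: l)) = q := by
      rw [w, hx, ν_pos, ν_pos]
      simp only [List.length_cons]
      rw [show ((l.length + 1 : ℕ) : ℤ) - (l.length : ℤ) = 1 by push_cast; ring, zpow_one]
    rw [hw, ih] at h
    rw [← h, List.length_cons, pow_succ]
    ring

include hv in
lemma v_neg_val : ∀ (l : List (Fin 2)), l ≠ [] →
    (v : ∀ _ : F, ℝ) (neg l) = q ^ l.length * (v 1 - 1) := by
  intro l
  induction l with
  | nil => intro h; exact absurd rfl h
  | cons i l ih =>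
    intro _
    have h := coord_eq v hv i (neg l)
    have hx : (FreeGroup.of i)⁻¹ * neg l = neg (i :: l) := (neg_cons i l).symm
    rw [hx] at h
    have hw : w (FreeGroup.of i) (neg l) = q⁻¹ := by
      rw [w, hx, ν_neg, ν_neg]
      simp only [List.length_cons]
      rw [show (l.length : ℤ) - ((l.length + 1 : ℕ) : ℤ) = -1 by push_cast; ring, zpow_neg_one]
    rw [hw] at h
    cases l with
    | nil =>
      have hδ : (δe : V) (neg []) = 1 := by
        rw [show neg [] = 1 from mk_nil_eq_one, δe_apply_one]
      rw [hδ] at h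
      have hv1 : (v : ∀ _ : F, ℝ) (neg []) = v 1 := by
        rw [show neg [] = 1 from mk_nil_eq_one]
      rw [hv1] at h
      -- h : q⁻¹ * v (neg [i]) + 1 = v 1
      have h2 : q⁻¹ * (v : ∀ _ : F, ℝ) (neg [i]) = v 1 - 1 := by linarith
      have : (v : ∀ _ : F, ℝ) (neg [i]) = q * (v 1 - 1) := by
        calc (v : ∀ _ : F, ℝ) (neg [i])
            = q * (q⁻¹ * (v : ∀ _ : F, ℝ) (neg [i])) := by
              rw [← mul_assoc, mul_inv_cancel₀ q_ne, one_mul]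
          _ = q * (v 1 - 1) := by rw [h2]
      rw [this]
      simp [pow_one]
    | cons j l' =>
      have hδ : (δe : V) (neg (j :: l')) = 0 := δe_apply_ne (neg_ne_one j l')
      rw [hδ, add_zero] at h
      have hprev := ih (by simp)
      rw [hprev] at h
      -- h : q⁻¹ * v (neg (i::j::l')) = q^{..} * (v 1 - 1)
      have : (v : ∀ _ : F, ℝ) (neg (i :: j :: l')) = q * (q ^ (j :: l').length * (v 1 - 1)) := by
        calc (v : ∀ _ : F, ℝ) (neg (i :: j :: l'))
            = q * (q⁻¹ * (v : ∀ _ : F, ℝ) (neg (i :: j :: l'))) := by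
              rw [← mul_assoc, mul_inv_cancel₀ q_ne, one_mul]
          _ = q * (q ^ (j :: l').length * (v 1 - 1)) := by rw [h]
      rw [this]
      simp only [List.length_cons, pow_succ]
      ring

end FixedPoint


lemma neg_injective : Function.Injective neg := by
  intro l l' h
  have h2 := congrArg FreeGroup.toWord h
  rw [toWord_neg, toWord_neg] at h2
  exact List.map_injective_iff.2 (fun a b hab => (Prod.mk.injEq _ _ _ _ ▸ hab).1) h2

section FixedPoint2
variable (v : V)

lemma sum_family (c : ℝ) (φ : List (Fin 2) → F) (hinj : Function.Injective φ)
    (hval : ∀ l : List (Fin 2), (v : ∀ _ : F, ℝ) (φ l) = q ^ l.length * c) (n : ℕ) :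
    ((2 * q^2) ^ n) * c^2 ≤ ‖v‖ ^ (2 : ℝ≥0∞).toReal := by
  classical
  set S : Finset F :=
    Finset.image (fun t : Fin n → Fin 2 => φ (List.ofFn t)) Finset.univ with hS
  have hle := lp.sum_rpow_le_norm_rpow toReal_two_pos v S
  have hinj2 : Function.Injective (fun t : Fin n → Fin 2 => φ (List.ofFn t)) := by
    intro t t' h
    exact List.ofFn_injective (hinj h)
  have hsum : ∑ x ∈ S, ‖(v : ∀ _ : F, ℝ) x‖ ^ (2 : ℝ≥0∞).toReal
      = ((2 * q^2) ^ n) * c^2 := by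
    rw [hS, Finset.sum_image (fun a _ b _ h => hinj2 h)]
    have hterm : ∀ t : Fin n → Fin 2,
        ‖(v : ∀ _ : F, ℝ) (φ (List.ofFn t))‖ ^ (2 : ℝ≥0∞).toReal = (q ^ n * c)^2 := by
      intro t
      rw [hval, List.length_ofFn]
      rw [show ((2:ℝ≥0∞).toReal) = ((2:ℕ):ℝ) by norm_num, Real.rpow_natCast]
      rw [Real.norm_eq_abs, sq_abs]
    rw [Finset.sum_congr rfl (fun t _ => hterm t), Finset.sum_const]
    have hcard : (Finset.univ : Finset (Fin n → Fin 2)).card = 2 ^ n := by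
      simp [Finset.card_univ]
    rw [hcard]
    push_cast
    ring
  rw [← hsum]
  exact hle

end FixedPoint2

lemma no_fp : ¬ ∃ v : V, ∀ g : F, ρA g v = v := by
  rintro ⟨v, hv⟩
  set c₀ : ℝ := (v : ∀ _ : F, ℝ) 1 with hc₀
  have hqq : (2 : ℝ) * q^2 = 9/8 := by norm_num [q]
  have hK : ∀ c : ℝ, (∀ n : ℕ, ((9:ℝ)/8) ^ n * c^2 ≤ ‖v‖ ^ (2 : ℝ≥0∞).toReal) → c = 0 := by
    intro c hc
    by_contra hne
    have hc2 : 0 < c^2 := by positivity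
    obtain ⟨n, hn⟩ := pow_unbounded_of_one_lt
      (‖v‖ ^ (2 : ℝ≥0∞).toReal / c^2) (by norm_num : (1:ℝ) < 9/8)
    have := hc n
    rw [div_lt_iff₀ hc2] at hn
    linarith
  have h1 : c₀ = 0 := by
    apply hK
    intro n
    rw [← hqq]
    exact sum_family v c₀ pos pos_injective (fun l => v_pos_val v hv l) n
  have h2 : q * (c₀ - 1) = 0 := by
    apply hK
    intro n
    rw [← hqq]
    refine sum_family v (q * (c₀ - 1)) (fun l => neg (0 :: l))
      (fun l l' h => List.cons_injective (neg_injective h)) (fun l => ?_) n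
    rw [v_neg_val v hv (0 :: l) (by simp), List.length_cons, pow_succ]
    ring
  rw [h1] at h2
  have : q * (0 - 1) ≠ 0 := by
    simp [q_ne]
  exact this h2

instance : Countable F := FreeGroup.toWord_injective.countable

instance sep_V : TopologicalSpace.SeparableSpace V := by
  classical
  set S : Set V := Set.range (fun p : F × ℚ => (p.2 : ℝ) • lp.single 2 p.1 (1:ℝ)) with hSdef
  have hScount : S.Countable := Set.countable_range _
  have hS : TopologicalSpace.IsSeparable S := hScount.isSeparable
  have hspan : TopologicalSpace.IsSeparable ((Submodule.span ℝ S : Submodule ℝ V) : Set V) :=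
    hS.span
  have hclos : TopologicalSpace.IsSeparable
      (closure ((Submodule.span ℝ S : Submodule ℝ V) : Set V)) := hspan.closure
  rw [← TopologicalSpace.isSeparable_univ_iff]
  apply hclos.mono
  intro f _
  have hsum := lp.hasSum_single (E := fun _ : F => ℝ) (p := 2)
    (by norm_num : (2:ℝ≥0∞) ≠ ⊤) f
  apply mem_closure_of_tendsto hsum
  filter_upwards with s
  apply Submodule.sum_mem
  intro x _
  have hsingle : (lp.single 2 x (f x) : V) = (f x) • ((1:ℚ):ℝ) • (lp.single 2 x (1:ℝ) : V) := by
    rw [show ((1:ℚ):ℝ) = (1:ℝ) by norm_num, one_smul, ← lp.single_smul]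
    simp [smul_eq_mul]
  rw [hsingle]
  apply Submodule.smul_mem
  apply Submodule.subset_span
  exact ⟨(x, 1), rfl⟩

end BadAff

/-- The free group `F₂` on two generators admits an action on a separable real Hilbert
space by continuous affine transformations which has a bounded orbit but no fixed
point. -/
theorem freeGroup_two_has_bad_affine_action :
    Nonempty (BadAffineAction (FreeGroup (Fin 2))) := by
  exact ⟨{ V := BadAff.V
           ρ := BadAff.ρA
           map_one := BadAff.ρA_one
           map_mul := BadAff.ρA_mul
           bounded_orbit := ⟨0, BadAff.orbit_bounded⟩
           no_fixed_point := BadAff.no_fp }⟩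
end
end

section
/- Let G be a group acting on a real Hilbert space V by continuous affine transformations (each g ∈ G acts as v ↦ L(g)v + b(g) with L(g) a bounded invertible linear operator and b(g) ∈ V). If every orbit of this action is bounded, then the action has a fixed point. -/
/-- Squared norm of a midpoint in an inner product space. -/
lemma norm_midpoint_sq_aux {V : Type*} [NormedAddCommGroup V] [InnerProductSpace ℝ V]
    (a b : V) : ‖midpoint ℝ a b‖ ^ 2 = ‖a‖ ^ 2 / 2 + ‖b‖ ^ 2 / 2 - ‖a - b‖ ^ 2 / 4 := by
  have hpar := parallelogram_law_with_norm ℝ a b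
  have hmid : ‖midpoint ℝ a b‖ = ‖a + b‖ / 2 := by
    rw [midpoint_eq_smul_add, norm_smul]
    norm_num
    ring
  rw [hmid]
  nlinarith [hpar, norm_nonneg (a + b), norm_nonneg (a - b)]

/-- Let `G` be a group acting on a real Hilbert space `V` by continuous affine
transformations.  If every orbit of this action is bounded, then the action has a
fixed point.  (No topology on `G` and no continuity in `g` is assumed.) -/
theorem fixed_point_of_all_orbits_bounded
    (G : Type*) (V : Type*) [Group G] [NormedAddCommGroup V]
    [InnerProductSpace ℝ V] [CompleteSpace V]
    (ρ : G → V →ᴬ[ℝ] V)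
    (h_one : ∀ v, ρ 1 v = v)
    (h_mul : ∀ g h v, ρ (g * h) v = ρ g (ρ h v))
    (h_bdd : ∀ v : V, Bornology.IsBounded (Set.range fun g => ρ g v)) :
    ∃ v : V, ∀ g : G, ρ g v = v := by
  classical
  haveI : Nonempty V := ⟨0⟩
  -- each orbit is norm-bounded
  have hb : ∀ v : V, ∃ r : ℝ, ∀ g : G, ‖ρ g v‖ ≤ r := by
    intro v
    obtain ⟨r, hr⟩ := isBounded_iff_forall_norm_le.mp (h_bdd v)
    exact ⟨r, fun g => hr _ ⟨g, rfl⟩⟩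
  -- linear parts act as differences
  have hsub : ∀ (g : G) (u v : V), (ρ g).contLinear (u - v) = ρ g u - ρ g v := by
    intro g u v
    simpa [vsub_eq_sub] using (ρ g).contLinear_map_vsub u v
  -- Banach–Steinhaus: uniform bound on the linear parts
  obtain ⟨C, hC⟩ : ∃ C : ℝ, ∀ g : G, ‖(ρ g).contLinear‖ ≤ C := by
    apply banach_steinhaus
    intro x
    obtain ⟨r1, hr1⟩ := hb x
    obtain ⟨r0, hr0⟩ := hb 0
    refine ⟨r1 + r0, fun g => ?_⟩
    have : (ρ g).contLinear x = ρ g x - ρ g 0 := by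
      simpa using hsub g x 0
    rw [this]
    calc ‖ρ g x - ρ g 0‖ ≤ ‖ρ g x‖ + ‖ρ g 0‖ := norm_sub_le _ _
      _ ≤ r1 + r0 := add_le_add (hr1 g) (hr0 g)
  set M : ℝ := max C 1 with hMdef
  have hM1 : (1 : ℝ) ≤ M := le_max_right _ _
  have hM0 : (0 : ℝ) < M := lt_of_lt_of_le one_pos hM1
  have hMg : ∀ g : G, ‖(ρ g).contLinear‖ ≤ M := fun g => (hC g).trans (le_max_left _ _)
  -- key lower bound: the affine maps don't contract by more than M
  have hlow : ∀ (g : G) (u v : V), ‖u - v‖ ≤ M * ‖ρ g u - ρ g v‖ := by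
    intro g u v
    have key : (ρ g⁻¹).contLinear (ρ g u - ρ g v) = u - v := by
      rw [hsub g⁻¹]
      rw [← h_mul, ← h_mul]
      simp [h_one]
    calc ‖u - v‖ = ‖(ρ g⁻¹).contLinear (ρ g u - ρ g v)‖ := by rw [key]
      _ ≤ ‖(ρ g⁻¹).contLinear‖ * ‖ρ g u - ρ g v‖ := (ρ g⁻¹).contLinear.le_opNorm _
      _ ≤ M * ‖ρ g u - ρ g v‖ :=
        mul_le_mul_of_nonneg_right (hMg g⁻¹) (norm_nonneg _)
  -- the invariant strongly convex functional
  set F : V → ℝ := fun v => sSup (Set.range fun g => ‖ρ g v‖ ^ 2) with hFdef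
  have hFbdd : ∀ v : V, BddAbove (Set.range fun g => ‖ρ g v‖ ^ 2) := by
    intro v
    obtain ⟨r, hr⟩ := hb v
    refine ⟨r ^ 2, ?_⟩
    rintro x ⟨g, rfl⟩
    exact pow_le_pow_left₀ (norm_nonneg _) (hr g) 2
  have hFge : ∀ (v : V) (g : G), ‖ρ g v‖ ^ 2 ≤ F v := by
    intro v g
    exact le_csSup (hFbdd v) ⟨g, rfl⟩
  have hF0 : ∀ v : V, 0 ≤ F v := fun v => (sq_nonneg _).trans (hFge v 1)
  -- invariance of F
  have hFinv : ∀ (g : G) (v : V), F (ρ g v) = F v := by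
    intro g v
    have hrange : (Set.range fun h => ‖ρ h (ρ g v)‖ ^ 2)
        = Set.range fun k => ‖ρ k v‖ ^ 2 := by
      ext x
      constructor
      · rintro ⟨h, rfl⟩
        refine ⟨h * g, ?_⟩
        show ‖ρ (h * g) v‖ ^ 2 = ‖ρ h (ρ g v)‖ ^ 2
        rw [h_mul]
      · rintro ⟨k, rfl⟩
        refine ⟨k * g⁻¹, ?_⟩
        show ‖ρ (k * g⁻¹) (ρ g v)‖ ^ 2 = ‖ρ k v‖ ^ 2
        rw [← h_mul]
        simp
    simp only [hFdef]
    rw [hrange]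
  -- strong convexity (midpoint form)
  have hmid : ∀ u v : V,
      F (midpoint ℝ u v) ≤ F u / 2 + F v / 2 - ‖u - v‖ ^ 2 / (4 * M ^ 2) := by
    intro u v
    have hne : (Set.range fun g => ‖ρ g (midpoint ℝ u v)‖ ^ 2).Nonempty :=
      ⟨_, ⟨1, rfl⟩⟩
    refine csSup_le hne ?_
    rintro x ⟨g, rfl⟩
    show ‖ρ g (midpoint ℝ u v)‖ ^ 2 ≤ _
    have h1 : ρ g (midpoint ℝ u v) = midpoint ℝ (ρ g u) (ρ g v) :=
      AffineMap.map_midpoint ((ρ g : V →ᵃ[ℝ] V)) u v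
    rw [h1, norm_midpoint_sq_aux (ρ g u) (ρ g v)]
    have h2 : ‖u - v‖ ^ 2 ≤ M ^ 2 * ‖ρ g u - ρ g v‖ ^ 2 := by
      have := hlow g u v
      nlinarith [norm_nonneg (u - v), norm_nonneg (ρ g u - ρ g v), hM0]
    have h3 := hFge u g
    have h4 := hFge v g
    have hM2 : (0 : ℝ) < M ^ 2 := pow_pos hM0 2
    have hkey : ‖u - v‖ ^ 2 / (4 * M ^ 2) ≤ ‖ρ g u - ρ g v‖ ^ 2 / 4 := by
      rw [div_le_div_iff₀ (by positivity) (by positivity)]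
      nlinarith [h2]
    linarith [h3, h4, hkey]
  -- the infimum of F
  set m : ℝ := sInf (Set.range F) with hmdef
  have hbdd_below : BddBelow (Set.range F) := ⟨0, by rintro x ⟨v, rfl⟩; exact hF0 v⟩
  have hm_le : ∀ v : V, m ≤ F v := fun v => csInf_le hbdd_below ⟨v, rfl⟩
  -- minimizing sequence
  have hseq : ∀ n : ℕ, ∃ v : V, F v < m + 1 / (n + 1) := by
    intro n
    have hlt : m < m + 1 / (n + 1) := by
      have : (0 : ℝ) < 1 / (n + 1) := by positivity
      linarith
    obtain ⟨x, ⟨v, rfl⟩, hx⟩ := exists_lt_of_csInf_lt (Set.range_nonempty F) hlt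
    exact ⟨v, hx⟩
  choose u hu using hseq
  -- Cauchy estimate
  have hcauchy_est : ∀ n k : ℕ,
      ‖u n - u k‖ ^ 2 ≤ 4 * M ^ 2 * (1 / (n + 1) + 1 / (k + 1)) := by
    intro n k
    have h1 := hmid (u n) (u k)
    have h2 := hm_le (midpoint ℝ (u n) (u k))
    have h3 := hu n
    have h4 := hu k
    have hM2 : (0 : ℝ) < M ^ 2 := pow_pos hM0 2
    have h5 : ‖u n - u k‖ ^ 2 / (4 * M ^ 2) ≤ 1 / (n + 1) / 2 + 1 / (k + 1) / 2 := by
      linarith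
    rw [div_le_iff₀ (by positivity)] at h5
    nlinarith [h5]
  -- the sequence is Cauchy
  have hCauchy : CauchySeq u := by
    apply cauchySeq_of_le_tendsto_0 (fun N : ℕ => Real.sqrt (8 * M ^ 2 * (1 / (N + 1))))
    · intro n k N hn hk
      rw [dist_eq_norm]
      rw [Real.le_sqrt (norm_nonneg _) (by positivity)]
      have hle : 1 / ((n : ℝ) + 1) + 1 / ((k : ℝ) + 1) ≤ 2 * (1 / (N + 1)) := by
        have hn' : 1 / ((n : ℝ) + 1) ≤ 1 / ((N : ℝ) + 1) := by
          apply one_div_le_one_div_of_le (by positivity)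
          exact_mod_cast Nat.succ_le_succ hn
        have hk' : 1 / ((k : ℝ) + 1) ≤ 1 / ((N : ℝ) + 1) := by
          apply one_div_le_one_div_of_le (by positivity)
          exact_mod_cast Nat.succ_le_succ hk
        linarith
      have := hcauchy_est n k
      nlinarith [pow_pos hM0 2]
    · have h1 : Filter.Tendsto (fun N : ℕ => 8 * M ^ 2 * (1 / ((N : ℝ) + 1)))
          Filter.atTop (nhds 0) := by
        have := tendsto_one_div_add_atTop_nhds_zero_nat.const_mul (8 * M ^ 2)
        simpa using this
      have h2 := (Real.continuous_sqrt.tendsto 0).comp h1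
      simpa [Function.comp_def] using h2
  obtain ⟨w, hw⟩ := cauchySeq_tendsto_of_complete hCauchy
  -- the limit minimizes F
  have hFw : F w = m := by
    have hle : F w ≤ m := by
      have hne : (Set.range fun g => ‖ρ g w‖ ^ 2).Nonempty := ⟨_, ⟨1, rfl⟩⟩
      refine csSup_le hne ?_
      rintro x ⟨g, rfl⟩
      show ‖ρ g w‖ ^ 2 ≤ m
      have htend : Filter.Tendsto (fun n => ‖ρ g (u n)‖ ^ 2)
          Filter.atTop (nhds (‖ρ g w‖ ^ 2)) :=
        ((((ρ g).continuous.tendsto w).comp hw).norm).pow 2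
      have htend2 : Filter.Tendsto (fun n : ℕ => m + 1 / ((n : ℝ) + 1))
          Filter.atTop (nhds m) := by
        have := tendsto_one_div_add_atTop_nhds_zero_nat.const_add m
        simpa using this
      exact le_of_tendsto_of_tendsto' htend htend2
        (fun n => le_trans (hFge (u n) g) (le_of_lt (hu n)))
    exact le_antisymm hle (hm_le w)
  -- w is a fixed point
  refine ⟨w, fun g => ?_⟩
  have h1 : F (ρ g w) = m := by rw [hFinv, hFw]
  have h2 := hmid w (ρ g w)
  have h3 := hm_le (midpoint ℝ w (ρ g w))
  have hM2 : (0 : ℝ) < M ^ 2 := pow_pos hM0 2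
  have h4 : ‖w - ρ g w‖ ^ 2 ≤ 0 := by
    rw [hFw, h1] at h2
    have h5 : ‖w - ρ g w‖ ^ 2 / (4 * M ^ 2) ≤ 0 := by linarith
    rw [div_le_iff₀ (by positivity)] at h5
    linarith [h5]
  have h6 : ‖w - ρ g w‖ = 0 := by
    nlinarith [norm_nonneg (w - ρ g w)]
  have h7 : w - ρ g w = 0 := norm_eq_zero.mp h6
  have := sub_eq_zero.mp h7
  exact this.symm
end

section
/- Let G be a totally disconnected, locally compact, σ-compact group. Then there exists a continuous moderate length ℓ : G → ℕ (taking values in the natural numbers). -/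
open Pointwise Set Filter MeasureTheory Topology
open scoped ENNReal NNReal

structure IsModerateLength {G : Type*} [Group G] [TopologicalSpace G] [MeasurableSpace G]
    (ℓ : G → ℝ) : Prop where
  nonneg : ∀ g : G, 0 ≤ ℓ g
  symm : ∀ g : G, ℓ g⁻¹ = ℓ g
  subadd : ∀ g h : G, ℓ (g * h) ≤ ℓ g + ℓ h
  compact_ball : ∀ r : ℝ, 0 ≤ r → IsCompact {g : G | ℓ g ≤ r}
  growth : ∀ m : MeasureTheory.Measure G, m.IsHaarMeasure → m.Regular →
    ∃ C : ℝ, 1 ≤ C ∧ ∀ r : ℝ, 1 ≤ r → m {g : G | ℓ g ≤ r} ≤ ENNReal.ofReal (C ^ r)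


lemma aux_one_add_sq_le (a : ℕ) : 1 + a * a ≤ 4 ^ a := by
  induction a with
  | zero => simp
  | succ a ih =>
    have : 4 ^ (a + 1) = 4 * 4 ^ a := by ring
    rw [this]
    nlinarith [ih]

lemma aux_geom (m : ℕ) :
    (∑ a ∈ Finset.Icc 1 m, 8 ^ (m - a) * 4 ^ a) + 4 ^ m ≤ 8 ^ m := by
  induction m with
  | zero => simp
  | succ m ih =>
    have hstep : (∑ a ∈ Finset.Icc 1 (m + 1), 8 ^ (m + 1 - a) * 4 ^ a)
        = 8 * (∑ a ∈ Finset.Icc 1 m, 8 ^ (m - a) * 4 ^ a) + 4 ^ (m + 1) := by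
      rw [Finset.sum_Icc_succ_top (by omega), Finset.mul_sum]
      simp only [Nat.sub_self, pow_zero, one_mul]
      congr 1
      apply Finset.sum_congr rfl
      intro a ha
      rw [Finset.mem_Icc] at ha
      have : m + 1 - a = (m - a) + 1 := by omega
      rw [this]; ring
    rw [hstep]
    have h1 : 8 ^ (m + 1) = 8 * 8 ^ m := by ring
    have h2 : 4 ^ (m + 1) = 4 * 4 ^ m := by ring
    omega


section Aux

variable {G : Type*} [Group G] [TopologicalSpace G] [IsTopologicalGroup G]

/-- In any topological group, a compact open set `W` admits a neighborhood `T` of `1`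
with `W * T ⊆ W`. -/
lemma aux_exist_mul_closure_nhd {W : Set G} (hWc : IsCompact W) (hWo : IsOpen W) :
    ∃ T ∈ 𝓝 (1 : G), W * T ⊆ W := by
  apply hWc.induction_on (p := fun S ↦ ∃ T ∈ 𝓝 (1 : G), S * T ⊆ W)
    ⟨Set.univ, by simp only [univ_mem, empty_mul, empty_subset, and_self]⟩
    (fun _ _ huv ⟨T, hT, mem⟩ ↦ ⟨T, hT, (mul_subset_mul_right huv).trans mem⟩)
    (fun U V ⟨T₁, hT₁, mem1⟩ ⟨T₂, hT₂, mem2⟩ ↦ ⟨T₁ ∩ T₂, inter_mem hT₁ hT₂, by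
      rw [union_mul]
      exact union_subset (mul_subset_mul_left inter_subset_left |>.trans mem1)
        (mul_subset_mul_left inter_subset_right |>.trans mem2)⟩)
  intro x memW
  have : (x, 1) ∈ (fun p : G × G ↦ p.1 * p.2) ⁻¹' W := by simp [memW]
  rcases isOpen_prod_iff.mp (continuous_mul.isOpen_preimage W hWo) x 1 this with
    ⟨U, V, Uopen, Vopen, xmemU, onememV, prodsub⟩
  have h6 : U * V ⊆ W := mul_subset_iff.mpr fun _ hx _ hy ↦ prodsub (mk_mem_prod hx hy)
  exact ⟨U ∩ W, ⟨U, Uopen.mem_nhds xmemU, W, fun _ a ↦ a, rfl⟩,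
    V, IsOpen.mem_nhds Vopen onememV, fun _ a ↦ h6 ((mul_subset_mul_right inter_subset_left) a)⟩

/-- Van Dantzig's theorem: a locally compact totally disconnected group has a
compact open subgroup. -/
lemma aux_exists_compact_open_subgroup
    [LocallyCompactSpace G] [TotallyDisconnectedSpace G] [T2Space G] :
    ∃ U : Subgroup G, IsCompact (U : Set G) ∧ IsOpen (U : Set G) := by
  obtain ⟨K, hKc, hK1⟩ := exists_compact_mem_nhds (1 : G)
  obtain ⟨W, hWclopen, hW1, hWK⟩ :=
    (loc_compact_Haus_tot_disc_of_zero_dim (H := G)).mem_nhds_iff.1 hK1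
  have hWc : IsCompact W := hKc.of_isClosed_subset hWclopen.1 hWK
  obtain ⟨T, hT, hWT⟩ := aux_exist_mul_closure_nhd hWc hWclopen.2
  rcases mem_nhds_iff.mp hT with ⟨U0, U0subT, U0open, oneU0⟩
  set V : Set G := U0 ∩ U0⁻¹ with hV
  have hVopen : IsOpen V := U0open.inter U0open.inv
  have hV1 : (1 : G) ∈ V := ⟨oneU0, by simpa using oneU0⟩
  have hVinv : V⁻¹ = V := by
    simp [hV, inter_comm]
  have hVT : V ⊆ T := fun x hx ↦ U0subT hx.1
  have hWmul : ∀ n : ℕ, W * V ^ (n + 1) ⊆ W := by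
    intro n
    induction' n with n ih
    · simpa using (mul_subset_mul_left hVT).trans hWT
    · rw [pow_succ, ← mul_assoc]
      exact (Set.mul_subset_mul_right ih).trans
        ((mul_subset_mul_left hVT).trans hWT)
  have hpowW : ∀ n : ℕ, V ^ (n + 1) ⊆ W := by
    intro n x hx
    have : x ∈ W * V ^ (n + 1) := ⟨1, hW1, x, hx, one_mul x⟩
    exact hWmul n this
  let S : Subgroup G :=
  { carrier := ⋃ n, V ^ (n + 1)
    mul_mem' := fun ha hb ↦ by
      rcases mem_iUnion.mp ha with ⟨k, hk⟩
      rcases mem_iUnion.mp hb with ⟨l, hl⟩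
      apply mem_iUnion.mpr
      exact ⟨k + 1 + l, by rw [add_assoc, pow_add]; exact Set.mul_mem_mul hk hl⟩
    one_mem' := mem_iUnion.mpr ⟨0, by simpa using hV1⟩
    inv_mem' := fun ha ↦ by
      rcases mem_iUnion.mp ha with ⟨k, hk⟩
      apply mem_iUnion.mpr
      refine ⟨k, ?_⟩
      rw [← hVinv]
      simpa only [inv_pow, Set.mem_inv, inv_inv] using hk }
  have hSopen : IsOpen (S : Set G) := by
    refine isOpen_iUnion fun n ↦ ?_
    rw [pow_succ]
    exact hVopen.mul_left
  have hSsub : (S : Set G) ⊆ W := by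
    intro x hx
    rcases mem_iUnion.mp hx with ⟨n, hn⟩
    exact hpowW n hn
  exact ⟨S, hWc.of_isClosed_subset (S.isClosed_of_isOpen hSopen) hSsub, hSopen⟩



lemma aux_of_A [T2Space G] [MeasurableSpace G] [BorelSpace G]
    (Us : Set G) (hUc : IsCompact Us) (hUo : IsOpen Us) (hU1 : (1:G) ∈ Us)
    (hUmul : Us * Us = Us) (hUinv : Us⁻¹ = Us)
    (A : ℕ → Set G) (hAc : ∀ a, IsCompact (A a)) (hAo : ∀ a, IsOpen (A a))
    (hAinv : ∀ a, (A a)⁻¹ = A a) (hUA : ∀ a, Us * A a = A a) (hAU : ∀ a, A a * Us = A a)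
    (hUsubA : ∀ a, Us ⊆ A a)
    (hAcov : ∀ a, ∃ FA : Finset G, (A a ⊆ ⋃ x ∈ FA, x • Us) ∧ FA.card ≤ 4 ^ a)
    (hGA : ∀ g : G, ∃ a, 1 ≤ a ∧ g ∈ A a) :
    ∃ ℓ : G → ℕ, Continuous ℓ ∧ IsModerateLength fun g => (ℓ g : ℝ) := by
  classical
  set B : ℕ → Set G :=
    fun n => ⋃ (L : List ℕ) (_ : L.sum ≤ n ∧ ∀ a ∈ L, 1 ≤ a), Us * (L.map A).prod with hB
  have hBmem : ∀ {n : ℕ} {g : G}, g ∈ B n ↔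
      ∃ L : List ℕ, (L.sum ≤ n ∧ ∀ a ∈ L, 1 ≤ a) ∧ g ∈ Us * (L.map A).prod := by
    intro n g
    simp only [hB, mem_iUnion, exists_prop]
  -- the key normalization lemma
  have hProdU : ∀ L : List ℕ, Us * (L.map A).prod * Us = Us * (L.map A).prod := by
    intro L
    induction L using List.reverseRecOn with
    | nil => simp [hUmul]
    | append_singleton L a ih =>
      rw [List.map_append, List.prod_append, List.map_singleton, List.prod_singleton,
        ← mul_assoc, mul_assoc (Us * (L.map A).prod) (A a) Us, hAU]
  have hProdInv : ∀ L : List ℕ, ((L.map A).prod)⁻¹ = (L.reverse.map A).prod := by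
    intro L
    induction L with
    | nil => simp
    | cons a L ih =>
      rw [List.map_cons, List.prod_cons, mul_inv_rev, ih, List.reverse_cons, List.map_append,
        List.prod_append, List.map_singleton, List.prod_singleton, hAinv]
  have hB0U : ∀ n, Us ⊆ B n := by
    intro n x hx
    refine hBmem.mpr ⟨[], ⟨by simp, by simp⟩, ?_⟩
    simp only [List.map_nil, List.prod_nil, mul_one]
    exact hx
  have hB0 : B 0 = Us := by
    apply Set.Subset.antisymm _ (hB0U 0)
    intro x hx
    obtain ⟨L, ⟨hsum, hpos⟩, hxL⟩ := hBmem.mp hx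
    have : L = [] := by
      cases L with
      | nil => rfl
      | cons a L =>
        have := hpos a (by simp)
        simp only [List.sum_cons] at hsum
        omega
    subst this
    simpa using hxL
  have hBmono : ∀ {i j : ℕ}, i ≤ j → B i ⊆ B j := by
    intro i j hij x hx
    obtain ⟨L, ⟨hsum, hpos⟩, hxL⟩ := hBmem.mp hx
    exact hBmem.mpr ⟨L, ⟨hsum.trans hij, hpos⟩, hxL⟩
  have hABsub : ∀ a, 1 ≤ a → A a ⊆ B a := by
    intro a ha x hx
    refine hBmem.mpr ⟨[a], ⟨by simp, by simpa using ha⟩, ?_⟩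
    simp only [List.map_singleton, List.prod_singleton]
    rw [hUA]
    exact hx
  have hBmul : ∀ i j : ℕ, B i * B j ⊆ B (i + j) := by
    rintro i j x ⟨y, hy, z, hz, rfl⟩
    obtain ⟨L, ⟨hsL, hpL⟩, hyL⟩ := hBmem.mp hy
    obtain ⟨M, ⟨hsM, hpM⟩, hzM⟩ := hBmem.mp hz
    refine hBmem.mpr ⟨L ++ M, ⟨?_, ?_⟩, ?_⟩
    · rw [List.sum_append]; omega
    · intro a ha
      rcases List.mem_append.mp ha with h | h
      exacts [hpL a h, hpM a h]
    · have key : Us * ((L ++ M).map A).prod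
          = (Us * (L.map A).prod) * (Us * (M.map A).prod) := by
        rw [List.map_append, List.prod_append]
        calc Us * ((L.map A).prod * (M.map A).prod)
            = (Us * (L.map A).prod) * (M.map A).prod := (mul_assoc _ _ _).symm
          _ = (Us * (L.map A).prod * Us) * (M.map A).prod := by rw [hProdU]
          _ = (Us * (L.map A).prod) * (Us * (M.map A).prod) := mul_assoc _ _ _
      rw [key]
      exact Set.mul_mem_mul hyL hzM
  have hBinvMem : ∀ (n : ℕ) (g : G), g ∈ B n → g⁻¹ ∈ B n := by
    intro n g hg
    obtain ⟨L, ⟨hsL, hpL⟩, hgL⟩ := hBmem.mp hg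
    refine hBmem.mpr ⟨L.reverse, ⟨by rw [List.sum_reverse]; exact hsL,
      fun a ha => hpL a (List.mem_reverse.mp ha)⟩, ?_⟩
    have h1 : g⁻¹ ∈ (Us * (L.map A).prod)⁻¹ := Set.inv_mem_inv.mpr hgL
    rw [mul_inv_rev, hProdInv, hUinv] at h1
    obtain ⟨y, hy, z, hz, hyz⟩ := h1
    rw [← hProdU]
    exact ⟨1 * y, ⟨1, hU1, y, hy, rfl⟩, z, hz, by rw [one_mul]; exact hyz⟩
  have hBrec : ∀ n : ℕ, B (n + 1) = ⋃ a ∈ Finset.Icc 1 (n + 1), B (n + 1 - a) * A a := by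
    intro n
    apply Set.Subset.antisymm
    · intro g hg
      obtain ⟨L, ⟨hsL, hpL⟩, hgL⟩ := hBmem.mp hg
      rcases L.eq_nil_or_concat with rfl | ⟨L', a, rfl⟩
      · refine mem_iUnion₂.mpr ⟨1, by simp, ?_⟩
        simp only [List.map_nil, List.prod_nil, mul_one] at hgL
        exact ⟨g, hB0U _ hgL, 1, hUsubA 1 hU1, mul_one g⟩
      · rw [List.concat_eq_append] at hsL hpL hgL
        have ha : 1 ≤ a := hpL a (by simp)
        have hsum : L'.sum + a ≤ n + 1 := by
          rw [List.sum_append, List.sum_cons, List.sum_nil] at hsL; omega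
        refine mem_iUnion₂.mpr ⟨a, Finset.mem_Icc.mpr ⟨ha, by omega⟩, ?_⟩
        have key : Us * ((L' ++ [a]).map A).prod = (Us * (L'.map A).prod) * A a := by
          rw [List.map_append, List.prod_append, List.map_singleton, List.prod_singleton,
            ← mul_assoc]
        rw [key] at hgL
        obtain ⟨y, hy, z, hz, rfl⟩ := hgL
        exact Set.mul_mem_mul
          (hBmem.mpr ⟨L', ⟨by omega, fun b hb => hpL b (by simp [hb])⟩, hy⟩) hz
    · refine Set.iUnion₂_subset fun a ha => ?_
      rw [Finset.mem_Icc] at ha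
      have h1 : B (n + 1 - a) * A a ⊆ B (n + 1 - a) * B a :=
        Set.mul_subset_mul_left (hABsub a ha.1)
      refine h1.trans ((hBmul _ _).trans ?_)
      have : n + 1 - a + a = n + 1 := by omega
      rw [this]
  have hBc : ∀ n, IsCompact (B n) := by
    intro n
    induction n using Nat.strong_induction_on with
    | _ n IH =>
      match n with
      | 0 => rw [hB0]; exact hUc
      | (n + 1) =>
        rw [hBrec n]
        apply (Finset.Icc 1 (n+1)).finite_toSet.isCompact_biUnion
        intro a ha
        rw [Finset.mem_coe, Finset.mem_Icc] at ha
        exact (IH (n + 1 - a) (by omega)).mul (hAc a)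
  have hBo : ∀ n, IsOpen (B n) := by
    intro n
    apply isOpen_iUnion
    intro L
    apply isOpen_iUnion
    intro _
    exact hUo.mul_right
  have hBcov : ∀ n, ∃ F : Finset G, (B n ⊆ ⋃ x ∈ F, x • Us) ∧ F.card ≤ 8 ^ n := by
    intro n
    induction n using Nat.strong_induction_on with
    | _ n IH =>
      match n with
      | 0 =>
        refine ⟨{1}, ?_, by simp⟩
        rw [hB0]
        intro x hx
        exact mem_iUnion₂.mpr ⟨1, Finset.mem_singleton_self 1, by simpa using hx⟩
      | (n + 1) =>
        have hch : ∀ a ∈ Finset.Icc 1 (n + 1), ∃ F : Finset G,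
            (B (n + 1 - a) ⊆ ⋃ x ∈ F, x • Us) ∧ F.card ≤ 8 ^ (n + 1 - a) := by
          intro a ha
          rw [Finset.mem_Icc] at ha
          exact IH (n + 1 - a) (by omega)
        choose! Fb hFb1 hFb2 using hch
        choose FA hFA1 hFA2 using hAcov
        refine ⟨(Finset.Icc 1 (n + 1)).biUnion (fun a => Fb a * FA a), ?_, ?_⟩
        · rw [hBrec n]
          refine Set.iUnion₂_subset fun a ha => ?_
          rintro g ⟨y, hy, z, hz, rfl⟩
          obtain ⟨x, hx, hyx⟩ := mem_iUnion₂.mp (hFb1 a ha hy)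
          obtain ⟨u, hu, rfl⟩ := hyx
          have huz : u * z ∈ A a := by rw [← hUA a]; exact Set.mul_mem_mul hu hz
          obtain ⟨v, hv, hvz⟩ := mem_iUnion₂.mp (hFA1 a huz)
          obtain ⟨t, ht, hvt⟩ := hvz
          refine mem_iUnion₂.mpr ⟨x * v,
            Finset.mem_biUnion.mpr ⟨a, ha, Finset.mul_mem_mul hx hv⟩, t, ht, ?_⟩
          simp only [smul_eq_mul] at hvt ⊢
          rw [mul_assoc x v t, hvt, ← mul_assoc]
        · calc ((Finset.Icc 1 (n + 1)).biUnion (fun a => Fb a * FA a)).card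
              ≤ ∑ a ∈ Finset.Icc 1 (n + 1), (Fb a * FA a).card := Finset.card_biUnion_le
            _ ≤ ∑ a ∈ Finset.Icc 1 (n + 1), 8 ^ (n + 1 - a) * 4 ^ a := by
                apply Finset.sum_le_sum
                intro a ha
                exact Finset.card_mul_le.trans
                  (Nat.mul_le_mul (hFb2 a ha) (hFA2 a))
            _ ≤ 8 ^ (n + 1) := le_trans (Nat.le_add_right _ _) (aux_geom (n + 1))
  have hBall : ∀ g : G, ∃ n, g ∈ B n := by
    intro g
    obtain ⟨a, ha, hga⟩ := hGA g
    exact ⟨a, hABsub a ha hga⟩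
  -- the length function
  set l : G → ℕ := fun g => Nat.find (hBall g) with hl
  have hl_mem : ∀ g : G, g ∈ B (l g) := fun g => Nat.find_spec (hBall g)
  have hl_le : ∀ (g : G) (n : ℕ), l g ≤ n ↔ g ∈ B n := by
    intro g n
    constructor
    · intro h
      exact hBmono h (hl_mem g)
    · intro h
      exact Nat.find_le h
  refine ⟨l, ?_, ?_⟩
  · -- continuity
    rw [continuous_discrete_rng]
    intro b
    have : l ⁻¹' {b} = match b with
        | 0 => B 0
        | (b + 1) => B (b + 1) \ B b := by
      ext g
      match b with
      | 0 =>
        simp only [Set.mem_preimage, Set.mem_singleton_iff]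
        rw [← Nat.le_zero, hl_le]
      | (b + 1) =>
        simp only [Set.mem_preimage, Set.mem_singleton_iff, Set.mem_diff]
        constructor
        · intro h
          refine ⟨(hl_le g (b+1)).mp (le_of_eq h), fun hb => ?_⟩
          have h2 : l g ≤ b := (hl_le g b).mpr hb
          omega
        · rintro ⟨h1, h2⟩
          have hle : l g ≤ b + 1 := (hl_le g (b+1)).mpr h1
          have hgt : ¬ l g ≤ b := fun hc => h2 ((hl_le g b).mp hc)
          omega
    rw [this]
    match b with
    | 0 => exact hBo 0
    | (b + 1) => exact (hBo (b+1)).sdiff (hBc b).isClosed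
  · -- moderate length
    refine ⟨fun g => by positivity, ?_, ?_, ?_, ?_⟩
    · -- symm
      intro g
      norm_cast
      have h1 : l g⁻¹ ≤ l g := (hl_le _ _).mpr (hBinvMem _ _ (hl_mem g))
      have h2 : l g ≤ l g⁻¹ := by
        refine (hl_le _ _).mpr ?_
        have := hBinvMem _ _ (hl_mem g⁻¹)
        rwa [inv_inv] at this
      omega
    · -- subadd
      intro g h
      have : g * h ∈ B (l g + l h) := hBmul _ _ (Set.mul_mem_mul (hl_mem g) (hl_mem h))
      have h2 := (hl_le _ _).mpr this
      push_cast
      exact_mod_cast h2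
    · -- compact balls
      intro r hr
      have : {g : G | (l g : ℝ) ≤ r} = B ⌊r⌋₊ := by
        ext g
        simp only [Set.mem_setOf_eq]
        rw [← hl_le, Nat.le_floor_iff hr]
      rw [this]
      exact hBc _
    · -- growth
      intro m hHaar hreg
      set M : ℝ := max 1 (m Us).toReal with hM
      have hM1 : (1 : ℝ) ≤ M := le_max_left _ _
      refine ⟨8 * M, by nlinarith, ?_⟩
      intro r hr
      have hr0 : (0 : ℝ) ≤ r := by linarith
      have hball : {g : G | (l g : ℝ) ≤ r} = B ⌊r⌋₊ := by
        ext g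
        simp only [Set.mem_setOf_eq]
        rw [← hl_le, Nat.le_floor_iff hr0]
      rw [hball]
      obtain ⟨F, hF1, hF2⟩ := hBcov ⌊r⌋₊
      have hsmul : ∀ x : G, m (x • Us) = m Us := by
        intro x
        have : x • Us = (fun y => x⁻¹ * y) ⁻¹' Us := by
          ext y
          simp [Set.mem_smul_set_iff_inv_smul_mem]
        rw [this, measure_preimage_mul]
      have hle1 : m (B ⌊r⌋₊) ≤ (F.card : ℝ≥0∞) * m Us := by
        calc m (B ⌊r⌋₊) ≤ m (⋃ x ∈ F, x • Us) := measure_mono hF1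
          _ ≤ ∑ x ∈ F, m (x • Us) := measure_biUnion_finset_le F _
          _ = (F.card : ℝ≥0∞) * m Us := by
              rw [Finset.sum_congr rfl (fun x _ => hsmul x), Finset.sum_const, nsmul_eq_mul]
      have hUfin : m Us < ⊤ := hUc.measure_lt_top
      have hle2 : m (B ⌊r⌋₊) ≤ ((8 ^ ⌊r⌋₊ : ℕ) : ℝ≥0∞) * ENNReal.ofReal M := by
        refine hle1.trans ?_
        apply mul_le_mul'
        · exact_mod_cast Nat.cast_le.mpr hF2
        · rw [hM]
          calc m Us = ENNReal.ofReal (m Us).toReal := (ENNReal.ofReal_toReal hUfin.ne).symm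
            _ ≤ ENNReal.ofReal (max 1 (m Us).toReal) :=
                ENNReal.ofReal_le_ofReal (le_max_right _ _)
      refine hle2.trans ?_
      have hcast : ((8 ^ ⌊r⌋₊ : ℕ) : ℝ≥0∞) = ENNReal.ofReal ((8 : ℝ) ^ (⌊r⌋₊ : ℕ)) := by
        rw [ENNReal.ofReal_pow (by norm_num : (0:ℝ) ≤ 8)]
        norm_cast
      rw [hcast, ← ENNReal.ofReal_mul (by positivity)]
      apply ENNReal.ofReal_le_ofReal
      have h8 : (8 : ℝ) ^ (⌊r⌋₊ : ℕ) ≤ (8 : ℝ) ^ r := by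
        rw [← Real.rpow_natCast]
        exact Real.rpow_le_rpow_of_exponent_le (by norm_num) ((Nat.floor_le hr0).trans_eq rfl)
      have hMr : M ≤ M ^ r := by
        calc M = M ^ (1 : ℝ) := (Real.rpow_one M).symm
          _ ≤ M ^ r := Real.rpow_le_rpow_of_exponent_le hM1 hr
      calc (8 : ℝ) ^ (⌊r⌋₊ : ℕ) * M ≤ (8 : ℝ) ^ r * M ^ r := by
            apply mul_le_mul h8 hMr (by linarith) (by positivity)
        _ = (8 * M) ^ r := (Real.mul_rpow (by norm_num) (by linarith)).symm


end Aux

/-- Let `G` be a totally disconnected, locally compact, σ-compact group.  Then there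
exists a continuous moderate length `ℓ : G → ℕ` taking values in the natural numbers. -/
theorem exists_continuous_moderate_length_of_totallyDisconnected
    (G : Type*) [Group G] [TopologicalSpace G] [IsTopologicalGroup G]
    [LocallyCompactSpace G] [TotallyDisconnectedSpace G] [SigmaCompactSpace G]
    [MeasurableSpace G] [BorelSpace G] :
    ∃ ℓ : G → ℕ, Continuous ℓ ∧ IsModerateLength fun g => (ℓ g : ℝ) := by
  classical
  haveI : T2Space G := (IsTopologicalGroup.t2Space_iff_one_closed (G := G)).mpr isClosed_singleton
  obtain ⟨U, hUc', hUo⟩ := aux_exists_compact_open_subgroup (G := G)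
  set Us : Set G := (U : Set G) with hUs
  have hUc : IsCompact Us := hUc'
  have hU1 : (1 : G) ∈ Us := U.one_mem
  have hUmul : Us * Us = Us := by
    apply Set.Subset.antisymm
    · rintro x ⟨a, ha, b, hb, rfl⟩; exact U.mul_mem ha hb
    · intro x hx; exact ⟨1, hU1, x, hx, one_mul x⟩
  have hUinv : Us⁻¹ = Us := by
    ext x; simp only [Set.mem_inv]
    exact ⟨fun h => by simpa [hUs] using U.inv_mem h, fun h => U.inv_mem h⟩
  have hcov : ∀ K : Set G, IsCompact K → ∃ F : Finset G, K ⊆ ⋃ x ∈ F, x • Us := by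
    intro K hK
    apply hK.elim_finite_subcover (fun x : G => x • Us) (fun x => hUo.smul x)
    intro g _
    exact mem_iUnion.mpr ⟨g, by simpa using smul_mem_smul_set (a := g) hU1⟩
  choose Fc hFc using hcov
  obtain ⟨s, hs⟩ : ∃ s : ℕ → G, ∀ g : G, ∃ n, g ∈ (s n) • Us := by
    set D : Set G := ⋃ m, ↑(Fc (compactCovering G m) (isCompact_compactCovering G m)) with hD
    have hDc : D.Countable := countable_iUnion fun m => (Fc _ _).countable_toSet
    have hcover : ∀ g : G, ∃ d ∈ D, g ∈ d • Us := by
      intro g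
      obtain ⟨m, hm⟩ := exists_mem_compactCovering g
      obtain ⟨x, hx, hgx⟩ := mem_iUnion₂.mp
        (hFc (compactCovering G m) (isCompact_compactCovering G m) hm)
      exact ⟨x, mem_iUnion.mpr ⟨m, hx⟩, hgx⟩
    have hDne : D.Nonempty := by
      obtain ⟨d, hd, _⟩ := hcover 1
      exact ⟨d, hd⟩
    obtain ⟨t, htD⟩ := hDc.exists_eq_range hDne
    refine ⟨t, fun g => ?_⟩
    obtain ⟨d, hd, hgd⟩ := hcover g
    rw [htD] at hd
    obtain ⟨n, rfl⟩ := hd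
    exact ⟨n, hgd⟩
  set P : ℕ → Set G := fun j => Us * {s j} * Us ∪ Us * {(s j)⁻¹} * Us with hP
  have hPc : ∀ j, IsCompact (P j) :=
    fun j => ((hUc.mul isCompact_singleton).mul hUc).union
      ((hUc.mul isCompact_singleton).mul hUc)
  have hPinv : ∀ j, (P j)⁻¹ = P j := by
    intro j
    simp only [hP, Set.union_inv, mul_inv_rev, Set.inv_singleton, hUinv, inv_inv]
    rw [Set.union_comm]
    congr 1 <;> rw [mul_assoc]
  have hPo : ∀ j, IsOpen (P j) := fun j => (hUo.mul_left).union (hUo.mul_left)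
  have hUP : ∀ j, Us * P j = P j := by
    intro j
    rw [hP]
    simp only [Set.mul_union, ← mul_assoc, hUmul]
  have hPU : ∀ j, P j * Us = P j := by
    intro j
    rw [hP]
    simp only [Set.union_mul, mul_assoc, hUmul]
  set w : ℕ → ℕ := fun j => max (j + 1) (Fc (P j) (hPc j)).card with hw
  have hwj : ∀ j, j < w j := fun j => lt_of_lt_of_le (Nat.lt_succ_self j) (le_max_left _ _)
  have hwcard : ∀ j, (Fc (P j) (hPc j)).card ≤ w j := fun j => le_max_right _ _
  set A : ℕ → Set G := fun a =>
    Us ∪ ⋃ j ∈ (Finset.range a).filter (fun j => w j = a), P j with hA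
  have hUsubA : ∀ a, Us ⊆ A a := fun a => Set.subset_union_left
  have hAc : ∀ a, IsCompact (A a) := by
    intro a
    apply hUc.union
    exact ((Finset.range a).filter (fun j => w j = a)).finite_toSet.isCompact_biUnion
      (fun j _ => hPc j)
  have hAo : ∀ a, IsOpen (A a) := fun a =>
    hUo.union (isOpen_biUnion fun j _ => hPo j)
  have hAinv : ∀ a, (A a)⁻¹ = A a := by
    intro a
    simp only [hA, Set.union_inv, Set.iUnion_inv, hUinv]
    congr 1
    exact iUnion_congr fun j => iUnion_congr fun _ => hPinv j
  have hUA : ∀ a, Us * A a = A a := by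
    intro a
    apply Set.Subset.antisymm
    · rw [hA]
      simp only [Set.mul_union, Set.mul_iUnion, hUmul]
      apply Set.union_subset_union_right
      exact iUnion_mono fun j => by
        simp only [Set.iUnion_subset_iff]
        intro hj
        rw [hUP j]
        exact fun x hx => mem_iUnion.mpr ⟨hj, hx⟩
    · intro x hx; exact ⟨1, hU1, x, hx, one_mul x⟩
  have hAU : ∀ a, A a * Us = A a := by
    intro a
    apply Set.Subset.antisymm
    · rw [hA]
      simp only [Set.union_mul, Set.iUnion_mul, hUmul]
      apply Set.union_subset_union_right
      exact iUnion_mono fun j => by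
        simp only [Set.iUnion_subset_iff]
        intro hj
        rw [hPU j]
        exact fun x hx => mem_iUnion.mpr ⟨hj, hx⟩
    · intro x hx; exact ⟨x, hx, 1, hU1, mul_one x⟩
  have hAcov : ∀ a, ∃ FA : Finset G, (A a ⊆ ⋃ x ∈ FA, x • Us) ∧ FA.card ≤ 4 ^ a := by
    intro a
    refine ⟨insert 1 (((Finset.range a).filter (fun j => w j = a)).biUnion
      (fun j => Fc (P j) (hPc j))), ?_, ?_⟩
    · rw [hA]
      apply Set.union_subset
      · intro x hx
        exact mem_iUnion₂.mpr ⟨1, Finset.mem_insert_self _ _, by simpa using hx⟩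
      · intro x hx
        obtain ⟨j, hj, hxj⟩ := mem_iUnion₂.mp hx
        obtain ⟨y, hy, hxy⟩ := mem_iUnion₂.mp (hFc (P j) (hPc j) hxj)
        exact mem_iUnion₂.mpr ⟨y, Finset.mem_insert_of_mem (Finset.mem_biUnion.mpr ⟨j, hj, hy⟩), hxy⟩
    · calc (insert 1 (((Finset.range a).filter (fun j => w j = a)).biUnion
          (fun j => Fc (P j) (hPc j)))).card
          ≤ (((Finset.range a).filter (fun j => w j = a)).biUnion
            (fun j => Fc (P j) (hPc j))).card + 1 := Finset.card_insert_le _ _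
        _ ≤ (∑ j ∈ (Finset.range a).filter (fun j => w j = a), (Fc (P j) (hPc j)).card) + 1 :=
            by gcongr; exact Finset.card_biUnion_le
        _ ≤ (∑ _j ∈ (Finset.range a).filter (fun j => w j = a), a) + 1 := by
            gcongr with j hj
            · exact (hwcard j).trans_eq (Finset.mem_filter.mp hj).2
        _ ≤ a * a + 1 := by
            rw [Finset.sum_const, smul_eq_mul]
            gcongr
            exact (Finset.card_filter_le _ _).trans (by simp)
        _ ≤ 4 ^ a := by have := aux_one_add_sq_le a; omega
  have hGA : ∀ g : G, ∃ a, 1 ≤ a ∧ g ∈ A a := by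
    intro g
    obtain ⟨n, hn⟩ := hs g
    obtain ⟨u, hu, rfl⟩ := hn
    refine ⟨w n, Nat.succ_le_of_lt (lt_of_le_of_lt (Nat.zero_le n) (hwj n)), ?_⟩
    have hgP : s n • u ∈ P n := by
      refine Or.inl ⟨1 * s n, ⟨1, hU1, s n, rfl, rfl⟩, u, hu, ?_⟩
      simp [smul_eq_mul]
    rw [hA]
    refine Or.inr (mem_iUnion₂.mpr ⟨n, ?_, hgP⟩)
    rw [Finset.mem_filter, Finset.mem_range]
    exact ⟨hwj n, rfl⟩
  exact aux_of_A Us hUc hUo hU1 hUmul hUinv A hAc hAo hAinv hUA hAU hUsubA hAcov hGA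
end

section
/- Let G be a locally compact group. If G is either compactly generated or both totally disconnected and σ-compact, then G admits a moderate measure. -/
open MeasureTheory
open scoped ENNReal

/-- A moderate measure on a locally compact group `G`. -/
structure IsModerateMeasure {G : Type*} [Group G] [TopologicalSpace G] [MeasurableSpace G]
    (μ : MeasureTheory.Measure G) : Prop where
  prob : MeasureTheory.IsProbabilityMeasure μ
  haar_ac : ∃ m : MeasureTheory.Measure G, m.IsHaarMeasure ∧ μ ≪ m ∧ m ≪ μ
  essBdd : ∀ g : G,
    essSup ((MeasureTheory.Measure.map (fun x => g * x) μ).rnDeriv μ) μ < ⊤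
  locBdd : ∀ K : Set G, IsCompact K → ∃ C : ℝ≥0∞, C ≠ ⊤ ∧ ∀ g ∈ K,
    essSup ((MeasureTheory.Measure.map (fun x => g * x) μ).rnDeriv μ) μ ≤ C

section Auxiliary

set_option linter.unusedSectionVars false
set_option linter.unusedVariables false

open Set
open scoped Pointwise

theorem abstract_moderate
    {G : Type*} [Group G] [TopologicalSpace G] [IsTopologicalGroup G]
    [LocallyCompactSpace G] [MeasurableSpace G] [BorelSpace G]
    (W : ℕ → Set G) (R M : ℝ≥0∞) (hR1 : 1 ≤ R) (hRtop : R ≠ ⊤) (hMtop : M ≠ ⊤)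
    (hmeas : ∀ n, MeasurableSet (W n))
    (hmul : ∀ i j : ℕ, W i * W j ⊆ W (i + j))
    (hcover : ∀ x : G, ∃ n, x ∈ W n)
    (hcompact : ∀ K : Set G, IsCompact K → ∃ n, K ⊆ W n)
    (hgrowth : ∀ n, Measure.haar (W n) ≤ M * R ^ n) :
    ∃ μ : Measure G, IsModerateMeasure μ := by
  classical
  set m : Measure G := Measure.haar with hm
  -- the length function
  set ℓ : G → ℕ := fun x => Nat.find (hcover x) with hℓdef
  have hℓ : ∀ x, x ∈ W (ℓ x) := fun x => Nat.find_spec (hcover x)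
  have hℓle : ∀ x n, x ∈ W n → ℓ x ≤ n := fun x n h => Nat.find_min' (hcover x) h
  have hsub : ∀ x y : G, ℓ (x * y) ≤ ℓ x + ℓ y := fun x y =>
    hℓle _ _ (hmul _ _ (Set.mul_mem_mul (hℓ x) (hℓ y)))
  have hℓmeas : Measurable ℓ := by
    apply measurable_to_nat
    intro y
    have : ℓ ⁻¹' {ℓ y} = W (ℓ y) \ (⋃ (k : ℕ) (_ : k < ℓ y), W k) := by
      ext x
      simp only [Set.mem_preimage, Set.mem_singleton_iff, Set.mem_diff, Set.mem_iUnion]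
      constructor
      · intro h
        rw [← h]
        exact ⟨hℓ x, by rintro ⟨k, hk, hxk⟩; have := hℓle _ _ hxk; omega⟩
      · rintro ⟨hxW, hnot⟩
        have h1 : ℓ x ≤ ℓ y := hℓle _ _ hxW
        rcases lt_or_eq_of_le h1 with h | h
        · exact absurd ⟨ℓ x, h, hℓ x⟩ hnot
        · exact h
    rw [this]
    exact (hmeas _).diff (MeasurableSet.iUnion fun k => MeasurableSet.iUnion fun _ => hmeas k)
  -- the density basic quantity
  set ε : ℝ≥0∞ := (2 * R)⁻¹ with hεdef
  have h2R0 : (2 : ℝ≥0∞) * R ≠ 0 := by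
    simp only [ne_eq, mul_eq_zero, not_or]
    exact ⟨two_ne_zero, fun h => by simp [h] at hR1⟩
  have h2Rtop : (2 : ℝ≥0∞) * R ≠ ⊤ := ENNReal.mul_ne_top (by norm_num) hRtop
  have hε0 : ε ≠ 0 := ENNReal.inv_ne_zero.2 h2Rtop
  have hεtop : ε ≠ ⊤ := ENNReal.inv_ne_top.2 h2R0
  have hε1 : ε ≤ 1 := ENNReal.inv_le_one.2 (le_mul_of_one_le_of_le (by norm_num) hR1)
  set f : G → ℝ≥0∞ := fun x => ε ^ ℓ x with hfdef
  have hf_meas : Measurable f := (measurable_from_nat (f := fun n => ε ^ n)).comp hℓmeas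
  have hf_pos : ∀ x, f x ≠ 0 := fun x => pow_ne_zero _ hε0
  have hf_top : ∀ x, f x ≠ ⊤ := fun x => ENNReal.pow_ne_top hεtop
  -- key inequality
  have hkey : ∀ (g x : G) (n : ℕ), g ∈ W n → f (g⁻¹ * x) ≤ ε⁻¹ ^ n * f x := by
    intro g x n hg
    have h1 : ℓ x ≤ n + ℓ (g⁻¹ * x) := by
      calc ℓ x = ℓ (g * (g⁻¹ * x)) := by rw [mul_inv_cancel_left]
      _ ≤ ℓ g + ℓ (g⁻¹ * x) := hsub _ _
      _ ≤ n + ℓ (g⁻¹ * x) := by gcongr; exact hℓle _ _ hg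
    have h2 : ε ^ (n + ℓ (g⁻¹ * x)) ≤ f x := pow_le_pow_right_of_le_one' hε1 h1
    calc f (g⁻¹ * x) = ε⁻¹ ^ n * (ε ^ n * ε ^ ℓ (g⁻¹ * x)) := by
          rw [← mul_assoc, ← ENNReal.inv_pow, ENNReal.inv_mul_cancel (pow_ne_zero _ hε0)
            (ENNReal.pow_ne_top hεtop), one_mul]
    _ = ε⁻¹ ^ n * ε ^ (n + ℓ (g⁻¹ * x)) := by rw [pow_add]
    _ ≤ ε⁻¹ ^ n * f x := by gcongr
  -- total mass
  set T : ℝ≥0∞ := ∫⁻ x, f x ∂m with hTdef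
  have hT_le : T ≤ M * 2 := by
    have hle : f ≤ fun x => ∑' n : ℕ, (W n).indicator (fun _ => ε ^ n) x := by
      intro x
      have : f x = (W (ℓ x)).indicator (fun _ => ε ^ (ℓ x)) x := by
        rw [Set.indicator_of_mem (hℓ x)]
      rw [this]
      exact ENNReal.le_tsum (ℓ x)
    calc T ≤ ∫⁻ x, ∑' n : ℕ, (W n).indicator (fun _ => ε ^ n) x ∂m := lintegral_mono hle
    _ = ∑' n : ℕ, ∫⁻ x, (W n).indicator (fun _ => ε ^ n) x ∂m :=
      lintegral_tsum fun n => ((measurable_const).indicator (hmeas n)).aemeasurable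
    _ = ∑' n : ℕ, ε ^ n * m (W n) := by
      simp_rw [lintegral_indicator_const (hmeas _)]
    _ ≤ ∑' n : ℕ, ε ^ n * (M * R ^ n) := ENNReal.tsum_le_tsum fun n => by gcongr; exact hgrowth n
    _ = M * ∑' n : ℕ, (ε * R) ^ n := by
      rw [← ENNReal.tsum_mul_left]
      congr 1; ext n; rw [mul_pow]; ring
    _ ≤ M * ∑' n : ℕ, (2⁻¹ : ℝ≥0∞) ^ n := by
      have hεR : ε * R ≤ 2⁻¹ := by
        rw [hεdef, ENNReal.mul_inv (Or.inl two_ne_zero) (Or.inl (by norm_num))]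
        calc 2⁻¹ * R⁻¹ * R = 2⁻¹ * (R⁻¹ * R) := by ring
        _ ≤ 2⁻¹ * 1 := by gcongr; exact ENNReal.inv_mul_le_one R
        _ = 2⁻¹ := mul_one _
      exact mul_le_mul_right (ENNReal.tsum_le_tsum fun n => pow_le_pow_left' hεR n) M
    _ = M * 2 := by rw [ENNReal.tsum_geometric, ENNReal.one_sub_inv_two, inv_inv 2]
  have hT_top : T ≠ ⊤ := (lt_of_le_of_lt hT_le (ENNReal.mul_lt_top hMtop.lt_top (by norm_num))).ne
  have hT_pos : T ≠ 0 := by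
    intro h0
    have hae : f =ᵐ[m] 0 := (lintegral_eq_zero_iff hf_meas).mp h0
    have : m {x | f x ≠ 0} = 0 := hae
    have huniv : {x : G | f x ≠ 0} = Set.univ := Set.eq_univ_of_forall fun x => hf_pos x
    rw [huniv] at this
    exact isOpen_univ.measure_ne_zero m ⟨1, trivial⟩ this
  -- the moderate measure
  set h : G → ℝ≥0∞ := fun x => T⁻¹ * f x with hhdef
  have hh_meas : Measurable h := (measurable_const.mul hf_meas)
  set μ : Measure G := m.withDensity h with hμdef
  have hμuniv : μ Set.univ = 1 := by
    rw [hμdef, withDensity_apply _ MeasurableSet.univ, Measure.restrict_univ, hhdef,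
      lintegral_const_mul _ hf_meas, ← hTdef, ENNReal.inv_mul_cancel hT_pos hT_top]
  have hprob : IsProbabilityMeasure μ := ⟨hμuniv⟩
  -- the translated measure as a density over μ
  have hmap : ∀ g : G, Measure.map (fun x => g * x) μ
      = μ.withDensity (fun x => f (g⁻¹ * x) * (f x)⁻¹) := by
    intro g
    have hq_meas : Measurable fun x => f (g⁻¹ * x) * (f x)⁻¹ :=
      (hf_meas.comp (measurable_const_mul g⁻¹)).mul hf_meas.inv
    have step1 : Measure.map (fun x => g * x) μ = m.withDensity (fun x => h (g⁻¹ * x)) := by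
      ext s hs
      rw [Measure.map_apply (measurable_const_mul g) hs, hμdef,
        withDensity_apply _ (measurable_const_mul g hs),
        withDensity_apply _ hs]
      have hinv : ∀ x : G, h (g⁻¹ * (g * x)) = h x := fun x => by rw [inv_mul_cancel_left]
      calc ∫⁻ x in (fun x => g * x) ⁻¹' s, h x ∂m
          = ∫⁻ x in (fun x => g * x) ⁻¹' s, h (g⁻¹ * (g * x)) ∂m := by
            apply lintegral_congr; intro x; rw [hinv]
      _ = ∫⁻ y in s, h (g⁻¹ * y) ∂(Measure.map (fun x => g * x) m) :=
            (setLIntegral_map hs (hh_meas.comp (measurable_const_mul g⁻¹))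
              (measurable_const_mul g)).symm
      _ = ∫⁻ y in s, h (g⁻¹ * y) ∂m := by rw [map_mul_left_eq_self m g]
    rw [step1, hμdef, ← withDensity_mul _ hh_meas hq_meas]
    congr 1
    ext x
    have hfc : f x * (f (g⁻¹ * x) * (f x)⁻¹) = f (g⁻¹ * x) := by
      rw [mul_comm, mul_assoc, ENNReal.inv_mul_cancel (hf_pos x) (hf_top x), mul_one]
    simp only [Pi.mul_apply, hhdef]
    rw [mul_assoc, hfc]
  -- bound for the Radon-Nikodym derivative
  have hbound : ∀ (g : G) (n : ℕ), g ∈ W n →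
      essSup ((Measure.map (fun x => g * x) μ).rnDeriv μ) μ ≤ ε⁻¹ ^ n := by
    intro g n hg
    have hq_meas : Measurable fun x => f (g⁻¹ * x) * (f x)⁻¹ :=
      (hf_meas.comp (measurable_const_mul g⁻¹)).mul hf_meas.inv
    have hrn : (Measure.map (fun x => g * x) μ).rnDeriv μ
        =ᵐ[μ] fun x => f (g⁻¹ * x) * (f x)⁻¹ := by
      rw [hmap g]
      exact Measure.rnDeriv_withDensity μ hq_meas
    refine essSup_le_of_ae_le _ ?_
    filter_upwards [hrn] with x hx
    rw [hx]
    calc f (g⁻¹ * x) * (f x)⁻¹ ≤ (ε⁻¹ ^ n * f x) * (f x)⁻¹ :=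
          mul_le_mul_left (hkey g x n hg) _
    _ = ε⁻¹ ^ n * (f x * (f x)⁻¹) := by ring
    _ = ε⁻¹ ^ n := by rw [ENNReal.mul_inv_cancel (hf_pos x) (hf_top x), mul_one]
  have hCtop : ∀ n : ℕ, (ε⁻¹ : ℝ≥0∞) ^ n ≠ ⊤ := fun n =>
    ENNReal.pow_ne_top (ENNReal.inv_ne_top.2 hε0)
  refine ⟨μ, hprob, ⟨m, inferInstance, withDensity_absolutelyContinuous m h,
      withDensity_absolutelyContinuous' hh_meas.aemeasurable
        (Filter.Eventually.of_forall fun x =>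
          mul_ne_zero (ENNReal.inv_ne_zero.2 hT_top) (hf_pos x))⟩, ?_, ?_⟩
  · intro g
    obtain ⟨n, hn⟩ := hcover g
    exact lt_of_le_of_lt (hbound g n hn) (hCtop n).lt_top
  · intro K hK
    obtain ⟨n, hn⟩ := hcompact K hK
    exact ⟨ε⁻¹ ^ n, hCtop n, fun g hg => hbound g n (hn hg)⟩



section Case1
variable {G : Type*} [Group G] [TopologicalSpace G] [IsTopologicalGroup G]
    [LocallyCompactSpace G] [MeasurableSpace G] [BorelSpace G]

theorem list_prod_mem_pow {S : Set G} : ∀ (l : List G), (∀ y ∈ l, y ∈ S) →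
    l.prod ∈ S ^ l.length := by
  intro l
  induction l with
  | nil => intro _; simp [Set.one_mem_one]
  | cons a l ih =>
    intro hmem
    rw [List.prod_cons, List.length_cons, pow_succ']
    exact Set.mul_mem_mul (hmem a List.mem_cons_self)
      (ih fun y hy => hmem y (List.mem_cons_of_mem a hy))

theorem case1_W (K : Set G) (hK : IsCompact K) (hKgen : Subgroup.closure K = ⊤) :
    ∃ (W : ℕ → Set G) (R M : ℝ≥0∞), 1 ≤ R ∧ R ≠ ⊤ ∧ M ≠ ⊤ ∧
      (∀ n, MeasurableSet (W n)) ∧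
      (∀ i j : ℕ, W i * W j ⊆ W (i + j)) ∧
      (∀ x : G, ∃ n, x ∈ W n) ∧
      (∀ K' : Set G, IsCompact K' → ∃ n, K' ⊆ W n) ∧
      (∀ n, Measure.haar (W n) ≤ M * R ^ n) := by
  classical
  set m : Measure G := Measure.haar with hm
  obtain ⟨C, hCcomp, hC1⟩ := exists_compact_mem_nhds (1 : G)
  set V0 : Set G := K ∪ K⁻¹ ∪ (C ∪ C⁻¹) with hV0
  set V : Set G := closure V0 with hV
  have hV0comp : IsCompact V0 := (hK.union hK.inv).union (hCcomp.union hCcomp.inv)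
  have hVcomp : IsCompact V := hV0comp.closure
  have hV1 : V ∈ nhds (1 : G) :=
    Filter.mem_of_superset hC1 fun x hx => subset_closure (Or.inr (Or.inl hx))
  have h1V : (1 : G) ∈ V := mem_of_mem_nhds hV1
  have hVpow : ∀ n, IsCompact (V ^ n) := by
    intro n
    induction n with
    | zero =>
        rw [pow_zero]
        have : (1 : Set G) = {(1 : G)} := rfl
        rw [this]
        exact isCompact_singleton
    | succ n ih => rw [pow_succ]; exact ih.mul hVcomp
  set W : ℕ → Set G := fun n => closure (V ^ n) with hW
  have hVWn : ∀ n, V ^ n ⊆ W n := fun n => subset_closure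
  have hWcomp : ∀ n, IsCompact (W n) := fun n => (hVpow n).closure
  have hmeas : ∀ n, MeasurableSet (W n) := fun n => isClosed_closure.measurableSet
  have hmono : Monotone W :=
    monotone_nat_of_le_succ fun n => closure_mono (Set.pow_subset_pow_right h1V (Nat.le_succ n))
  have hmul : ∀ i j : ℕ, W i * W j ⊆ W (i + j) := by
    intro i j
    have h1 : closure (V ^ i) * closure (V ^ j) ⊆ closure (V ^ i * V ^ j) :=
      smul_set_closure_subset (V ^ i) (V ^ j)
    rw [← pow_add] at h1
    exact h1
  have hcoverV : ∀ x : G, ∃ n, x ∈ V ^ n := by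
    intro x
    have hx : x ∈ Submonoid.closure (K ∪ K⁻¹) := by
      rw [← Subgroup.closure_toSubmonoid]
      show x ∈ (Subgroup.closure K).toSubmonoid
      rw [hKgen]
      trivial
    obtain ⟨l, hl, hprod⟩ := Submonoid.exists_list_of_mem_closure hx
    refine ⟨l.length, ?_⟩
    rw [← hprod]
    exact list_prod_mem_pow l fun y hy => subset_closure (Or.inl (hl y hy))
  have hcover : ∀ x : G, ∃ n, x ∈ W n := fun x =>
    (hcoverV x).imp fun n hn => hVWn n hn
  have hints : ∀ x : G, ∃ n, x ∈ interior (W n) := by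
    intro x
    obtain ⟨n, hn⟩ := hcoverV x
    refine ⟨n + 1, ?_⟩
    have hsub : x • interior V ⊆ W (n + 1) := by
      intro y hy
      obtain ⟨v, hv, rfl⟩ := hy
      exact hVWn (n + 1) (by rw [pow_succ]; exact Set.mul_mem_mul hn (interior_subset hv))
    have hopen : IsOpen (x • interior V) := isOpen_interior.smul x
    have hxmem : x ∈ x • interior V :=
      ⟨1, mem_interior_iff_mem_nhds.2 hV1, mul_one x⟩
    exact interior_maximal hsub hopen hxmem
  have hcompact : ∀ K' : Set G, IsCompact K' → ∃ n, K' ⊆ W n := by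
    intro K' hK'
    obtain ⟨t, ht⟩ := hK'.elim_finite_subcover (fun n => interior (W n))
      (fun n => isOpen_interior)
      (fun x _ => by obtain ⟨n, hn⟩ := hints x; exact Set.mem_iUnion.2 ⟨n, hn⟩)
    refine ⟨t.sup id, fun x hx => ?_⟩
    obtain ⟨i, hit, hxi⟩ := Set.mem_iUnion₂.1 (ht hx)
    exact hmono (Finset.le_sup (f := id) hit) (interior_subset hxi)
  -- growth
  obtain ⟨t, ht⟩ := (hWcomp 2).elim_finite_subcover (fun x : G => x • interior V)
    (fun x => isOpen_interior.smul x)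
    (fun z _ => Set.mem_iUnion.2 ⟨z, 1, mem_interior_iff_mem_nhds.2 hV1, mul_one z⟩)
  have hstep : ∀ n, m (W (n + 2)) ≤ (t.card : ℝ≥0∞) * m (W (n + 1)) := by
    intro n
    have incl : V ^ (n + 2) ⊆ ⋃ x ∈ t, x • V ^ (n + 1) := by
      have h2 : V ^ (n + 2) = V ^ 2 * V ^ n := by rw [← pow_add]; ring_nf
      rw [h2]
      calc V ^ 2 * V ^ n ⊆ (⋃ x ∈ t, x • interior V) * V ^ n :=
            Set.mul_subset_mul_right ((hVWn 2).trans ht)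
      _ = ⋃ x ∈ t, (x • interior V) * V ^ n := by
          rw [Set.iUnion₂_mul]
      _ ⊆ ⋃ x ∈ t, x • V ^ (n + 1) := by
          refine Set.iUnion₂_mono fun x hx => ?_
          rw [smul_mul_assoc]
          refine Set.smul_set_mono ?_
          rw [pow_succ']
          exact Set.mul_subset_mul_right interior_subset
    have incl2 : W (n + 2) ⊆ ⋃ x ∈ t, x • W (n + 1) := by
      calc W (n + 2) ⊆ closure (⋃ x ∈ t, x • V ^ (n + 1)) := closure_mono incl
      _ = ⋃ x ∈ t, closure (x • V ^ (n + 1)) := Finset.closure_biUnion t _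
      _ = ⋃ x ∈ t, x • W (n + 1) := by simp_rw [closure_smul]; rfl
    calc m (W (n + 2)) ≤ m (⋃ x ∈ t, x • W (n + 1)) := measure_mono incl2
    _ ≤ ∑ x ∈ t, m (x • W (n + 1)) := measure_biUnion_finset_le t _
    _ = ∑ _x ∈ t, m (W (n + 1)) := Finset.sum_congr rfl fun x _ => measure_smul m x _
    _ = (t.card : ℝ≥0∞) * m (W (n + 1)) := by rw [Finset.sum_const, nsmul_eq_mul]
  set R : ℝ≥0∞ := (t.card : ℝ≥0∞) + 1 with hR
  set M : ℝ≥0∞ := m (W 0) + m (W 1) + 1 with hM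
  have hR1 : 1 ≤ R := le_add_self
  have hRtop : R ≠ ⊤ := by
    refine ENNReal.add_ne_top.2 ⟨ENNReal.natCast_ne_top _, ENNReal.one_ne_top⟩
  have hMtop : M ≠ ⊤ := by
    refine ENNReal.add_ne_top.2 ⟨ENNReal.add_ne_top.2
      ⟨((hWcomp 0).measure_lt_top).ne, ((hWcomp 1).measure_lt_top).ne⟩, ENNReal.one_ne_top⟩
  have hgrowth : ∀ n, m (W n) ≤ M * R ^ n := by
    intro n
    induction n using Nat.strong_induction_on with
    | _ n ih =>
      rcases n with (_ | _ | k)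
      · rw [pow_zero, mul_one, hM]
        exact le_add_right (le_add_right le_rfl)
      · rw [pow_one]
        have h1 : m (W 1) ≤ M := by
          rw [hM]
          calc m (W 1) ≤ m (W 0) + m (W 1) := le_add_self
          _ ≤ m (W 0) + m (W 1) + 1 := le_add_right le_rfl
        exact h1.trans (le_mul_of_one_le_right' hR1)
      · calc m (W (k + 2)) ≤ (t.card : ℝ≥0∞) * m (W (k + 1)) := hstep k
        _ ≤ R * (M * R ^ (k + 1)) := by
            refine mul_le_mul' (by rw [hR]; exact le_add_right le_rfl) (ih (k + 1) (by omega))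
        _ = M * R ^ (k + 2) := by ring
  exact ⟨W, R, M, hR1, hRtop, hMtop, hmeas, hmul, hcover, hcompact, hgrowth⟩

end Case1



section ModW
variable {G : Type*} [Group G]

/-- Words of weighted length at most `n` -/
noncomputable def modW (U : Set G) (E : ℕ → Set G) (w : ℕ → ℕ) : ℕ → Set G
  | n => U ∪ ⋃ (i : ℕ) (h : 0 < w i ∧ w i ≤ n), E i * modW U E w (n - w i)
  termination_by n => n
  decreasing_by omega

variable {U : Set G} {E : ℕ → Set G} {w : ℕ → ℕ}

theorem modW_eq (n : ℕ) :
    modW U E w n = U ∪ ⋃ (i : ℕ) (_ : 0 < w i ∧ w i ≤ n), E i * modW U E w (n - w i) := by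
  rw [modW]

theorem subset_modW (n : ℕ) : U ⊆ modW U E w n := by
  rw [modW_eq]; exact Set.subset_union_left

theorem modW_mono : ∀ n m : ℕ, n ≤ m → modW U E w n ⊆ modW U E w m := by
  intro n
  induction n using Nat.strong_induction_on with
  | _ n ih =>
    intro m hnm
    rw [modW_eq, modW_eq (n := m)]
    refine Set.union_subset_union le_rfl ?_
    refine Set.iUnion₂_subset fun i hi => ?_
    have h1 : E i * modW U E w (n - w i) ⊆ E i * modW U E w (m - w i) :=
      Set.mul_subset_mul_left (ih (n - w i) (by omega) _ (by omega))
    exact h1.trans (Set.subset_iUnion₂ (s := fun i _ => E i * modW U E w (m - w i)) i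
      ⟨hi.1, hi.2.trans hnm⟩)

theorem mul_modW (hUU : U * U = U) (hUE : ∀ i, U * E i = E i) :
    ∀ n, U * modW U E w n = modW U E w n := by
  intro n
  induction n using Nat.strong_induction_on with
  | _ n ih =>
    rw [modW_eq, Set.mul_union, hUU]
    congr 1
    rw [Set.mul_iUnion₂]
    refine Set.iUnion₂_congr fun i hi => ?_
    rw [← mul_assoc, hUE]

theorem modW_mul (hUU : U * U = U) (hUE : ∀ i, U * E i = E i) :
    ∀ n m : ℕ, modW U E w n * modW U E w m ⊆ modW U E w (n + m) := by
  intro n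
  induction n using Nat.strong_induction_on with
  | _ n ih =>
    intro m
    conv_lhs => rw [modW_eq (n := n)]
    rw [Set.union_mul, Set.iUnion₂_mul]
    refine Set.union_subset ?_ ?_
    · rw [mul_modW hUU hUE]
      exact modW_mono m (n + m) (by omega)
    · refine Set.iUnion₂_subset fun i hi => ?_
      rw [mul_assoc]
      have h1 : E i * (modW U E w (n - w i) * modW U E w m) ⊆
          E i * modW U E w (n - w i + m) :=
        Set.mul_subset_mul_left (ih (n - w i) (by omega) m)
      refine h1.trans ?_
      have h2 : E i * modW U E w (n - w i + m) ⊆ E i * modW U E w (n + m - w i) :=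
        Set.mul_subset_mul_left (modW_mono _ _ (by omega))
      refine h2.trans ?_
      rw [modW_eq (n := n + m)]
      exact Set.subset_union_of_subset_right
        (Set.subset_iUnion₂ (s := fun i _ => E i * modW U E w (n + m - w i)) i
          ⟨hi.1, by omega⟩) _

theorem modW_mem_E (h1U : (1 : G) ∈ U) {i : ℕ} (hwi : 0 < w i) :
    E i ⊆ modW U E w (w i) := by
  intro x hx
  rw [modW_eq]
  refine Set.subset_union_of_subset_right
    (Set.subset_iUnion₂ (s := fun j _ => E j * modW U E w (w i - w j)) i
      ⟨hwi, le_rfl⟩) _ ?_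
  exact ⟨x, hx, 1, subset_modW _ h1U, mul_one x⟩

theorem modW_isOpen [TopologicalSpace G] [IsTopologicalGroup G]
    (hU : IsOpen U) (hE : ∀ i, IsOpen (E i)) (n : ℕ) : IsOpen (modW U E w n) := by
  induction n using Nat.strong_induction_on with
  | _ n ih =>
    rw [modW_eq]
    refine hU.union (isOpen_iUnion fun i => isOpen_iUnion fun hi => ?_)
    exact (ih (n - w i) (by omega)).mul_left

end ModW

section Case2
variable {G : Type*} [Group G] [TopologicalSpace G] [IsTopologicalGroup G]
    [LocallyCompactSpace G] [MeasurableSpace G] [BorelSpace G]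

theorem pow_calc248 (w n : ℕ) (hw : w ≤ n) :
    (2 : ℝ≥0∞) ^ w * 8 ^ (n - w) = 8 ^ n * ((4 : ℝ≥0∞) ^ w)⁻¹ := by
  have h48 : (4 : ℝ≥0∞) ^ w * ((4 : ℝ≥0∞) ^ w)⁻¹ = 1 :=
    ENNReal.mul_inv_cancel (pow_ne_zero _ (by norm_num)) (ENNReal.pow_ne_top (by norm_num))
  have key : (2 : ℝ≥0∞) ^ w * 8 ^ (n - w) * 4 ^ w = 8 ^ n := by
    have h24 : (2 : ℝ≥0∞) ^ w * 4 ^ w = 8 ^ w := by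
      rw [← mul_pow]; norm_num
    calc (2 : ℝ≥0∞) ^ w * 8 ^ (n - w) * 4 ^ w
        = (2 : ℝ≥0∞) ^ w * 4 ^ w * 8 ^ (n - w) := by ring
    _ = 8 ^ w * 8 ^ (n - w) := by rw [h24]
    _ = 8 ^ n := by rw [← pow_add]; congr 1; omega
  calc (2 : ℝ≥0∞) ^ w * 8 ^ (n - w)
      = (2 : ℝ≥0∞) ^ w * 8 ^ (n - w) * (4 ^ w * (4 ^ w)⁻¹) := by rw [h48, mul_one]
  _ = (2 : ℝ≥0∞) ^ w * 8 ^ (n - w) * 4 ^ w * (4 ^ w)⁻¹ := by ring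
  _ = 8 ^ n * (4 ^ w)⁻¹ := by rw [key]

theorem list_prod_mem_of_mul_closed {V N : Set G} (h1V : (1 : G) ∈ V)
    (hNV : N * V ⊆ V) : ∀ l : List G, (∀ y ∈ l, y ∈ N) → l.prod ∈ V := by
  intro l
  induction l with
  | nil => intro _; simpa using h1V
  | cons a l ih =>
    intro hmem
    rw [List.prod_cons]
    exact hNV (Set.mul_mem_mul (hmem a List.mem_cons_self)
      (ih fun y hy => hmem y (List.mem_cons_of_mem a hy)))

theorem case2_W (htd : TotallyDisconnectedSpace G) (hσ : SigmaCompactSpace G) :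
    ∃ (W : ℕ → Set G) (R M : ℝ≥0∞), 1 ≤ R ∧ R ≠ ⊤ ∧ M ≠ ⊤ ∧
      (∀ n, MeasurableSet (W n)) ∧
      (∀ i j : ℕ, W i * W j ⊆ W (i + j)) ∧
      (∀ x : G, ∃ n, x ∈ W n) ∧
      (∀ K' : Set G, IsCompact K' → ∃ n, K' ⊆ W n) ∧
      (∀ n, Measure.haar (W n) ≤ M * R ^ n) := by
  classical
  set m : Measure G := Measure.haar with hm
  haveI : T2Space G := IsTopologicalGroup.t2Space_iff_one_closed.mpr isClosed_singleton
  -- a compact open set around 1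
  obtain ⟨C, hCcomp, hC1⟩ := exists_compact_mem_nhds (1 : G)
  obtain ⟨Vc, hVcClopen, hVc1, hVcsub⟩ :=
    (loc_compact_Haus_tot_disc_of_zero_dim (H := G)).mem_nhds_iff.mp (interior_mem_nhds.2 hC1)
  have hVcComp : IsCompact Vc :=
    hCcomp.of_isClosed_subset hVcClopen.isClosed (hVcsub.trans interior_subset)
  have hVcOpen : IsOpen Vc := hVcClopen.isOpen
  -- a compact open subgroup
  obtain ⟨N, hN1, hNV⟩ := compact_open_separated_mul_left hVcComp hVcOpen Set.Subset.rfl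
  set S : Set G := (N ∩ Vc) ∩ ((N ∩ Vc))⁻¹ with hS
  have hS1 : S ∈ nhds (1 : G) := by
    refine Filter.inter_mem (Filter.inter_mem hN1 (hVcOpen.mem_nhds hVc1)) ?_
    have h2 : (N ∩ Vc) ∈ nhds (1 : G) := Filter.inter_mem hN1 (hVcOpen.mem_nhds hVc1)
    exact inv_mem_nhds_one G h2
  have hSsym : S⁻¹ = S := by
    rw [hS, Set.inter_inv, inv_inv, Set.inter_comm]
  have hSN : S ⊆ N := fun x hx => hx.1.1
  set U : Subgroup G := Subgroup.closure S with hU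
  have hUsubV : (U : Set G) ⊆ Vc := by
    intro x hx
    have hx' : x ∈ Submonoid.closure (S ∪ S⁻¹) := by
      rw [← Subgroup.closure_toSubmonoid]
      exact hx
    rw [hSsym, Set.union_self] at hx'
    obtain ⟨l, hl, hprod⟩ := Submonoid.exists_list_of_mem_closure hx'
    rw [← hprod]
    exact list_prod_mem_of_mul_closed hVc1 hNV l fun y hy => hSN (hl y hy)
  have hUopen : IsOpen (U : Set G) :=
    U.isOpen_of_mem_nhds (Filter.mem_of_superset hS1 Subgroup.subset_closure)
  have hUcomp : IsCompact (U : Set G) :=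
    hVcComp.of_isClosed_subset (U.isClosed_of_isOpen hUopen) hUsubV
  have h1U : (1 : G) ∈ (U : Set G) := U.one_mem
  have hUU : (U : Set G) * (U : Set G) = (U : Set G) := by
    apply Set.Subset.antisymm
    · rintro x ⟨a, ha, b, hb, rfl⟩
      exact U.mul_mem ha hb
    · intro x hx
      exact ⟨x, hx, 1, U.one_mem, mul_one x⟩
  -- countably many coset representatives
  have hcovU : ∀ (K' : Set G), IsCompact K' → ∃ t : Finset G, K' ⊆ ⋃ g ∈ t, g • (U : Set G) := by
    intro K' hK'
    exact hK'.elim_finite_subcover (fun g : G => g • (U : Set G)) (fun g => hUopen.smul g)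
      (fun x _ => Set.mem_iUnion.2 ⟨x, 1, h1U, mul_one x⟩)
  choose t ht using fun n => hcovU (compactCovering G n) (isCompact_compactCovering G n)
  set D : Set G := insert 1 (⋃ n, (t n : Set G)) with hD
  have hDc : D.Countable := (Set.countable_iUnion fun n => (t n).countable_toSet).insert 1
  obtain ⟨d, hd⟩ := hDc.exists_eq_range ⟨1, Set.mem_insert _ _⟩
  have hdx : ∀ x : G, ∃ i, x ∈ d i • (U : Set G) := by
    intro x
    have hx : x ∈ ⋃ n, compactCovering G n := by
      rw [iUnion_compactCovering]; trivial
    obtain ⟨n, hn⟩ := Set.mem_iUnion.1 hx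
    obtain ⟨g, hgt, hxg⟩ := Set.mem_iUnion₂.1 (ht n hn)
    have hgD : g ∈ D := Set.mem_insert_of_mem _ (Set.mem_iUnion.2 ⟨n, hgt⟩)
    rw [hd] at hgD
    obtain ⟨i, rfl⟩ := hgD
    exact ⟨i, hxg⟩
  -- the generating pieces
  set E : ℕ → Set G := fun i => (U : Set G) * {d i} * (U : Set G) with hE
  have hEopen : ∀ i, IsOpen (E i) := fun i => hUopen.mul_left
  have hEcomp : ∀ i, IsCompact (E i) := fun i =>
    (hUcomp.mul isCompact_singleton).mul hUcomp
  have hUE : ∀ i, (U : Set G) * E i = E i := by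
    intro i
    rw [hE]
    calc (U : Set G) * ((U : Set G) * {d i} * (U : Set G))
        = (U : Set G) * (U : Set G) * {d i} * (U : Set G) := by
          rw [mul_assoc, mul_assoc, mul_assoc]
    _ = (U : Set G) * {d i} * (U : Set G) := by rw [hUU]
  choose T hT using fun i => hcovU (E i) (hEcomp i)
  set w : ℕ → ℕ := fun i => i + (T i).card + 1 with hw
  have hw0 : ∀ i, 0 < w i := fun i => by simp only [hw]; omega
  set W : ℕ → Set G := modW (U : Set G) E w with hWdef
  -- basic properties
  have hmeas : ∀ n, MeasurableSet (W n) :=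
    fun n => (modW_isOpen hUopen hEopen n).measurableSet
  have hmul : ∀ i j : ℕ, W i * W j ⊆ W (i + j) := modW_mul hUU hUE
  have hEW : ∀ i, E i ⊆ W (w i) := fun i => modW_mem_E h1U (hw0 i)
  have hdU_E : ∀ i, d i • (U : Set G) ⊆ E i := by
    intro i x hx
    obtain ⟨u, hu, rfl⟩ := hx
    have : (1 : G) * d i * u ∈ E i :=
      Set.mul_mem_mul (Set.mul_mem_mul h1U rfl) hu
    simpa using this
  have hcover : ∀ x : G, ∃ n, x ∈ W n := by
    intro x
    obtain ⟨i, hi⟩ := hdx x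
    exact ⟨w i, hEW i (hdU_E i hi)⟩
  have hcompact : ∀ K' : Set G, IsCompact K' → ∃ n, K' ⊆ W n := by
    intro K' hK'
    obtain ⟨s, hs⟩ := hK'.elim_finite_subcover (fun i : ℕ => d i • (U : Set G))
      (fun i => hUopen.smul (d i)) (fun x _ => Set.mem_iUnion.2 (hdx x))
    refine ⟨s.sup w, fun x hx => ?_⟩
    obtain ⟨i, his, hxi⟩ := Set.mem_iUnion₂.1 (hs hx)
    exact modW_mono (w i) (s.sup w) (Finset.le_sup (f := w) his) (hEW i (hdU_E i hxi))
  -- growth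
  have hXmul : ∀ (i : ℕ) (X : Set G), (U : Set G) * X = X →
      m (E i * X) ≤ ((T i).card : ℝ≥0∞) * m X := by
    intro i X hX
    have h1 : E i * X ⊆ ⋃ g ∈ T i, g • X := by
      calc E i * X ⊆ (⋃ g ∈ T i, g • (U : Set G)) * X := Set.mul_subset_mul_right (hT i)
      _ = ⋃ g ∈ T i, g • (U : Set G) * X := Set.iUnion₂_mul _ _
      _ = ⋃ g ∈ T i, g • X := by simp_rw [smul_mul_assoc, hX]
    calc m (E i * X) ≤ m (⋃ g ∈ T i, g • X) := measure_mono h1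
    _ ≤ ∑ g ∈ T i, m (g • X) := measure_biUnion_finset_le _ _
    _ = ∑ _g ∈ T i, m X := Finset.sum_congr rfl fun g _ => measure_smul m g X
    _ = ((T i).card : ℝ≥0∞) * m X := by rw [Finset.sum_const, nsmul_eq_mul]
  have hUX : ∀ n, (U : Set G) * W n = W n := mul_modW hUU hUE
  have hkw : ∀ i, ((T i).card : ℝ≥0∞) ≤ 2 ^ w i := by
    intro i
    have h1 : (T i).card ≤ 2 ^ w i :=
      le_trans (Nat.lt_two_pow_self).le (Nat.pow_le_pow_right (by norm_num) (by simp only [hw]; omega))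
    exact_mod_cast h1
  have hgrow : ∀ n, m (W n) ≤ 2 * 8 ^ n * m (U : Set G) := by
    intro n
    induction n using Nat.strong_induction_on with
    | _ n ih =>
      have hWn : W n = (U : Set G) ∪ ⋃ (i : ℕ) (_ : 0 < w i ∧ w i ≤ n),
          E i * W (n - w i) := modW_eq n
      have hterm : ∀ i : ℕ, m (⋃ (_ : 0 < w i ∧ w i ≤ n), E i * W (n - w i)) ≤
          2 * 8 ^ n * m (U : Set G) * ((4 : ℝ≥0∞) ^ w i)⁻¹ := by
        intro i
        by_cases hg : 0 < w i ∧ w i ≤ n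
        · rw [Set.iUnion_eq_if, if_pos hg]
          calc m (E i * W (n - w i)) ≤ ((T i).card : ℝ≥0∞) * m (W (n - w i)) :=
                hXmul i _ (hUX _)
          _ ≤ 2 ^ w i * (2 * 8 ^ (n - w i) * m (U : Set G)) :=
                mul_le_mul' (hkw i) (ih (n - w i) (by omega))
          _ = 2 ^ w i * 8 ^ (n - w i) * (2 * m (U : Set G)) := by ring
          _ = 8 ^ n * ((4 : ℝ≥0∞) ^ w i)⁻¹ * (2 * m (U : Set G)) := by
                rw [pow_calc248 (w i) n hg.2]
          _ = 2 * 8 ^ n * m (U : Set G) * ((4 : ℝ≥0∞) ^ w i)⁻¹ := by ring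
        · rw [Set.iUnion_eq_if, if_neg hg, measure_empty]
          exact zero_le
      have hsum : ∑' i : ℕ, ((4 : ℝ≥0∞) ^ w i)⁻¹ ≤ 2⁻¹ := by
        have h1 : ∀ i : ℕ, ((4 : ℝ≥0∞) ^ w i)⁻¹ ≤ 4⁻¹ * (2⁻¹ : ℝ≥0∞) ^ i := by
          intro i
          have h2 : (4 : ℝ≥0∞) * 2 ^ i ≤ 4 ^ w i := by
            calc (4 : ℝ≥0∞) * 2 ^ i ≤ 4 * 4 ^ i :=
                  mul_le_mul_right (pow_le_pow_left' (by norm_num) i) 4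
            _ = 4 ^ (i + 1) := by rw [pow_succ, mul_comm]
            _ ≤ 4 ^ w i := pow_le_pow_right' (by norm_num) (by simp only [hw]; omega)
          calc ((4 : ℝ≥0∞) ^ w i)⁻¹ ≤ ((4 : ℝ≥0∞) * 2 ^ i)⁻¹ := ENNReal.inv_le_inv' h2
          _ = 4⁻¹ * ((2 : ℝ≥0∞) ^ i)⁻¹ :=
                ENNReal.mul_inv (Or.inl (by norm_num)) (Or.inl (by norm_num))
          _ = 4⁻¹ * (2⁻¹ : ℝ≥0∞) ^ i := by rw [ENNReal.inv_pow]
        calc ∑' i : ℕ, ((4 : ℝ≥0∞) ^ w i)⁻¹ ≤ ∑' i : ℕ, 4⁻¹ * (2⁻¹ : ℝ≥0∞) ^ i :=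
              ENNReal.tsum_le_tsum h1
        _ = 4⁻¹ * ∑' i : ℕ, (2⁻¹ : ℝ≥0∞) ^ i := ENNReal.tsum_mul_left
        _ = 4⁻¹ * 2 := by rw [ENNReal.tsum_geometric, ENNReal.one_sub_inv_two, inv_inv]
        _ = 2⁻¹ := by
              rw [show (4 : ℝ≥0∞) = 2 * 2 by norm_num,
                ENNReal.mul_inv (Or.inl two_ne_zero) (Or.inl ENNReal.ofNat_ne_top), mul_assoc,
                ENNReal.inv_mul_cancel two_ne_zero ENNReal.ofNat_ne_top, mul_one]
      calc m (W n) ≤ m (U : Set G) + m (⋃ (i : ℕ) (_ : 0 < w i ∧ w i ≤ n),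
            E i * W (n - w i)) := by rw [hWn]; exact measure_union_le _ _
      _ ≤ m (U : Set G) + ∑' i : ℕ, m (⋃ (_ : 0 < w i ∧ w i ≤ n), E i * W (n - w i)) := by
            gcongr
            exact measure_iUnion_le _
      _ ≤ m (U : Set G) + ∑' i : ℕ, 2 * 8 ^ n * m (U : Set G) * ((4 : ℝ≥0∞) ^ w i)⁻¹ := by
            gcongr
            exact hterm _
      _ = m (U : Set G) + 2 * 8 ^ n * m (U : Set G) * ∑' i : ℕ, ((4 : ℝ≥0∞) ^ w i)⁻¹ := by
            rw [ENNReal.tsum_mul_left]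
      _ ≤ m (U : Set G) + 2 * 8 ^ n * m (U : Set G) * 2⁻¹ := by gcongr
      _ = m (U : Set G) + 8 ^ n * m (U : Set G) * (2 * 2⁻¹) := by ring
      _ = m (U : Set G) + 8 ^ n * m (U : Set G) := by
            rw [ENNReal.mul_inv_cancel two_ne_zero ENNReal.ofNat_ne_top, mul_one]
      _ ≤ 8 ^ n * m (U : Set G) + 8 ^ n * m (U : Set G) := by
            gcongr
            exact le_mul_of_one_le_left' (one_le_pow_of_one_le' (by norm_num : (1:ℝ≥0∞) ≤ 8) n)
      _ = 2 * 8 ^ n * m (U : Set G) := by ring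
  refine ⟨W, 8, 2 * m (U : Set G), by norm_num, by norm_num, ?_, hmeas, hmul, hcover, hcompact, ?_⟩
  · exact ENNReal.mul_ne_top (by norm_num) hUcomp.measure_lt_top.ne
  · intro n
    calc m (W n) ≤ 2 * 8 ^ n * m (U : Set G) := hgrow n
    _ = 2 * m (U : Set G) * 8 ^ n := by ring

end Case2


end Auxiliary

/-- Let `G` be a locally compact group.  If `G` is either compactly generated or both
totally disconnected and σ-compact, then `G` admits a moderate measure. -/
theorem exists_moderateMeasure
    (G : Type*) [Group G] [TopologicalSpace G] [IsTopologicalGroup G]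
    [LocallyCompactSpace G] [MeasurableSpace G] [BorelSpace G]
    (h : (∃ K : Set G, IsCompact K ∧ Subgroup.closure K = ⊤) ∨
      (TotallyDisconnectedSpace G ∧ SigmaCompactSpace G)) :
    ∃ μ : Measure G, IsModerateMeasure μ := by
  rcases h with ⟨K, hK, hKgen⟩ | ⟨htd, hσ⟩
  · obtain ⟨W, R, M, hR1, hRtop, hMtop, hmeas, hmul, hcover, hcompact, hgrowth⟩ :=
      case1_W K hK hKgen
    exact abstract_moderate W R M hR1 hRtop hMtop hmeas hmul hcover hcompact hgrowth
  · obtain ⟨W, R, M, hR1, hRtop, hMtop, hmeas, hmul, hcover, hcompact, hgrowth⟩ :=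
      case2_W htd hσ
    exact abstract_moderate W R M hR1 hRtop hMtop hmeas hmul hcover hcompact hgrowth
end

section
/- Let G be a locally compact group and H an open subgroup of finite index in G. If H admits a moderate measure, then so does G. -/
open MeasureTheory
open scoped ENNReal

lemma aux_le_essSup_smul {α : Type*} [MeasurableSpace α] (μ ν : Measure α)
    [IsFiniteMeasure μ] [IsFiniteMeasure ν] (hac : ν ≪ μ) :
    ν ≤ essSup (ν.rnDeriv μ) μ • μ := by
  conv_lhs => rw [← Measure.withDensity_rnDeriv_eq ν μ hac]
  rw [← withDensity_const]
  exact withDensity_mono (ENNReal.ae_le_essSup _)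

lemma aux_essSup_rnDeriv_le {α : Type*} [MeasurableSpace α] (μ ν : Measure α)
    [IsFiniteMeasure ν] [SigmaFinite μ] {C : ℝ≥0∞} (hC0 : C ≠ 0) (hCtop : C ≠ ∞)
    (hle : ν ≤ C • μ) :
    essSup (ν.rnDeriv μ) μ ≤ C := by
  have h1 : C⁻¹ • ν ≤ μ := by
    rw [Measure.le_iff']
    intro s
    rw [Measure.smul_apply, smul_eq_mul]
    calc C⁻¹ * ν s ≤ C⁻¹ * (C * μ s) := by
          refine mul_le_mul_right ?_ _
          have := Measure.le_iff'.1 hle s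
          simpa [Measure.smul_apply, smul_eq_mul] using this
      _ = μ s := by rw [← mul_assoc, ENNReal.inv_mul_cancel hC0 hCtop, one_mul]
  have h2 := Measure.rnDeriv_le_one_of_le h1
  have h3 := Measure.rnDeriv_smul_left_of_ne_top ν μ (ENNReal.inv_ne_top.mpr hC0)
  refine essSup_le_of_ae_le C ?_
  filter_upwards [h2, h3] with x hx2 hx3
  rw [hx3] at hx2
  simp only [Pi.smul_apply, smul_eq_mul, Pi.one_apply] at hx2
  calc ν.rnDeriv μ x = C * (C⁻¹ * ν.rnDeriv μ x) := by
        rw [← mul_assoc, ENNReal.mul_inv_cancel hC0 hCtop, one_mul]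
    _ ≤ C * 1 := mul_le_mul_right hx2 _
    _ = C := mul_one C

/-- Let `G` be a locally compact group and `H` an open subgroup of finite index in `G`.
If `H` admits a moderate measure, then so does `G`. -/
theorem moderateMeasure_of_openFiniteIndexSubgroup
    (G : Type*) [Group G] [TopologicalSpace G] [IsTopologicalGroup G]
    [LocallyCompactSpace G] [MeasurableSpace G] [BorelSpace G]
    (H : Subgroup G) (h_open : IsOpen (H : Set G)) (h_fin : H.FiniteIndex)
    (hH : ∃ μH : Measure H, IsModerateMeasure μH) :
    ∃ μ : Measure G, IsModerateMeasure μ := by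
  classical
  obtain ⟨μH, hμH⟩ := hH
  obtain ⟨mH, hmH_haar, hμm, hmμ⟩ := hμH.haar_ac
  haveI := hμH.prob
  haveI := hmH_haar.toIsMulLeftInvariant
  haveI := hmH_haar.toIsFiniteMeasureOnCompacts
  haveI := hmH_haar.toIsOpenPosMeasure
  haveI : Finite (G ⧸ H) := H.finite_quotient_of_finiteIndex
  haveI := Fintype.ofFinite (G ⧸ H)
  have hHmeas : MeasurableSet (H : Set G) := h_open.measurableSet
  have hHclosed : IsClosed (H : Set G) := H.isClosed_of_isOpen h_open
  have hι : MeasurableEmbedding ((↑) : H → G) := MeasurableEmbedding.subtype_coe hHmeas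
  -- left translations on G are measurable embeddings
  have hmulG : ∀ c : G, MeasurableEmbedding (fun x : G => c * x) := fun c =>
    MeasurableEquiv.measurableEmbedding
      ⟨⟨fun x => c * x, fun x => c⁻¹ * x, fun x => by simp, fun x => by simp⟩,
        measurable_const_mul c, measurable_const_mul c⁻¹⟩
  -- left translations on H are measurable embeddings
  have hmulHm : ∀ h : H, Measurable (fun x : H => h * x) := by
    intro h
    refine hι.measurable_comp_iff.mp ?_
    exact (measurable_const_mul (h : G)).comp measurable_subtype_coe
  have hmulH : ∀ h : H, MeasurableEmbedding (fun x : H => h * x) := fun h =>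
    MeasurableEquiv.measurableEmbedding
      ⟨⟨fun x : H => h * x, fun x => h⁻¹ * x, fun x => by simp, fun x => by simp⟩,
        hmulHm h, hmulHm h⁻¹⟩
  -- coset representatives
  set T : G ⧸ H → G := fun q => q.out with hT
  set f : G ⧸ H → H → G := fun q x => T q * (x : G) with hf
  have hfq : ∀ q, MeasurableEmbedding (f q) := fun q => (hmulG (T q)).comp hι
  have hmem : ∀ (g : G) (q : G ⧸ H), (T (g • q))⁻¹ * (g * T q) ∈ H := by
    intro g q
    rw [← QuotientGroup.eq]
    rw [hT]
    simp only
    rw [QuotientGroup.out_eq']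
    exact (MulAction.Quotient.mk_smul_out H g q).symm
  set hgq : G → G ⧸ H → H := fun g q => ⟨(T (g • q))⁻¹ * (g * T q), hmem g q⟩ with hgqdef
  have hcomp : ∀ (g : G) (q : G ⧸ H),
      (f (g • q)) ∘ (fun x : H => hgq g q * x) = fun x : H => (g * T q) * (x : G) := by
    intro g q
    funext x
    show T (g • q) * ((hgq g q * x : H) : G) = (g * T q) * (x : G)
    have : ((hgq g q * x : H) : G) = ((T (g • q))⁻¹ * (g * T q)) * (x : G) := rfl
    rw [this, ← mul_assoc, mul_inv_cancel_left]
  have hterm : ∀ (κ : Measure H) (g : G) (q : G ⧸ H) (s : Set G),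
      κ ((fun x : H => (g * T q) * (x : G)) ⁻¹' s)
        = (Measure.map (fun x : H => hgq g q * x) κ) ((f (g • q)) ⁻¹' s) := by
    intro κ g q s
    rw [(hmulH (hgq g q)).map_apply, ← Set.preimage_comp, hcomp g q]
  have hpre : ∀ (g : G) (q : G ⧸ H) (s : Set G),
      (f q) ⁻¹' ((fun x : G => g * x) ⁻¹' s) = (fun x : H => (g * T q) * (x : G)) ⁻¹' s := by
    intro g q s
    ext x
    simp only [Set.mem_preimage, hf, mul_assoc]
  set n : ℝ≥0∞ := (Fintype.card (G ⧸ H) : ℝ≥0∞) with hn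
  have hn0 : n ≠ 0 := by
    simp [hn, Fintype.card_ne_zero]
  have hntop : n ≠ ∞ := by simp [hn]
  set μ : Measure G := n⁻¹ • ∑ q : G ⧸ H, Measure.map (f q) μH with hμdef
  have hμ_apply : ∀ s : Set G, μ s = n⁻¹ * ∑ q : G ⧸ H, μH ((f q) ⁻¹' s) := by
    intro s
    rw [hμdef, Measure.smul_apply, Measure.finset_sum_apply, smul_eq_mul]
    congr 1
    exact Finset.sum_congr rfl fun q _ => (hfq q).map_apply μH s
  -- reindexing along the action of g
  have hreindex : ∀ (g : G) (F : G ⧸ H → ℝ≥0∞), ∑ q : G ⧸ H, F (g • q) = ∑ q : G ⧸ H, F q := by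
    intro g F
    exact Equiv.sum_comp (MulAction.toPerm g) F
  have hmain : ∀ (g : G) (C : ℝ≥0∞),
      (∀ q : G ⧸ H, Measure.map (fun x : H => hgq g q * x) μH ≤ C • μH) →
      Measure.map (fun x : G => g * x) μ ≤ C • μ := by
    intro g C hC
    rw [Measure.le_iff']
    intro s
    rw [(hmulG g).map_apply, hμ_apply, Measure.smul_apply, smul_eq_mul, hμ_apply]
    calc n⁻¹ * ∑ q : G ⧸ H, μH ((f q) ⁻¹' ((fun x : G => g * x) ⁻¹' s))
        = n⁻¹ * ∑ q : G ⧸ H,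
            (Measure.map (fun x : H => hgq g q * x) μH) ((f (g • q)) ⁻¹' s) := by
          congr 1
          exact Finset.sum_congr rfl fun q _ => by rw [hpre g q s, hterm μH g q s]
      _ ≤ n⁻¹ * ∑ q : G ⧸ H, C * μH ((f (g • q)) ⁻¹' s) := by
          refine mul_le_mul_right (Finset.sum_le_sum fun q _ => ?_) _
          have := Measure.le_iff'.1 (hC q) ((f (g • q)) ⁻¹' s)
          simpa [Measure.smul_apply, smul_eq_mul] using this
      _ = C * (n⁻¹ * ∑ q : G ⧸ H, μH ((f q) ⁻¹' s)) := by
          rw [← Finset.mul_sum, hreindex g (fun q => μH ((f q) ⁻¹' s))]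
          ring
  -- probability
  haveI hμprob : IsProbabilityMeasure μ := by
    constructor
    rw [hμ_apply]
    simp only [Set.preimage_univ, measure_univ, Finset.sum_const, Finset.card_univ,
      nsmul_eq_mul, mul_one]
    exact ENNReal.inv_mul_cancel hn0 hntop
  -- the Haar measure on G
  set m : Measure G := ∑ q : G ⧸ H, Measure.map (f q) mH with hmdef
  have hm_apply : ∀ s : Set G, m s = ∑ q : G ⧸ H, mH ((f q) ⁻¹' s) := by
    intro s
    rw [hmdef, Measure.finset_sum_apply]
    exact Finset.sum_congr rfl fun q _ => (hfq q).map_apply mH s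
  have hminv : ∀ g : G, Measure.map (fun x : G => g * x) m = m := by
    intro g
    ext s hs
    rw [(hmulG g).map_apply, hm_apply, hm_apply]
    calc ∑ q : G ⧸ H, mH ((f q) ⁻¹' ((fun x : G => g * x) ⁻¹' s))
        = ∑ q : G ⧸ H, mH ((f (g • q)) ⁻¹' s) := by
          refine Finset.sum_congr rfl fun q _ => ?_
          rw [hpre g q s, hterm mH g q s, MeasureTheory.map_mul_left_eq_self mH (hgq g q)]
      _ = ∑ q : G ⧸ H, mH ((f q) ⁻¹' s) := hreindex g (fun q => mH ((f q) ⁻¹' s))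
  haveI hmfc : IsFiniteMeasureOnCompacts m := by
    constructor
    intro K hK
    rw [hm_apply]
    refine ENNReal.sum_lt_top.mpr fun q _ => ?_
    have h1 : IsCompact ((fun x : G => (T q)⁻¹ * x) '' K) := hK.image (continuous_const.mul continuous_id)
    have heq : (f q) ⁻¹' K = ((↑) : H → G) ⁻¹' ((fun x : G => (T q)⁻¹ * x) '' K) := by
      ext x
      simp only [Set.mem_preimage, hf, Set.mem_image]
      constructor
      · intro hx
        exact ⟨T q * (x : G), hx, inv_mul_cancel_left _ _⟩
      · rintro ⟨y, hy, hyx⟩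
        have : y = T q * (x : G) := by rw [← hyx, mul_inv_cancel_left]
        rwa [← this]
    have h2 : IsCompact ((f q) ⁻¹' K) := by
      rw [heq]
      exact hHclosed.isClosedEmbedding_subtypeVal.isCompact_preimage h1
    exact h2.measure_lt_top
  haveI hmop : m.IsOpenPosMeasure := by
    constructor
    intro U hU hUne
    obtain ⟨u, hu⟩ := hUne
    set q : G ⧸ H := QuotientGroup.mk u with hq
    have hmem' : (T q)⁻¹ * u ∈ H := by
      rw [← QuotientGroup.eq, hT]
      simp only
      rw [QuotientGroup.out_eq']
    have hne : ((f q) ⁻¹' U).Nonempty := by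
      refine ⟨⟨(T q)⁻¹ * u, hmem'⟩, ?_⟩
      show T q * ((T q)⁻¹ * u) ∈ U
      rwa [mul_inv_cancel_left]
    have hopen : IsOpen ((f q) ⁻¹' U) :=
      hU.preimage (continuous_const.mul continuous_subtype_val)
    have hpos : mH ((f q) ⁻¹' U) ≠ 0 := hopen.measure_ne_zero mH hne
    rw [hm_apply]
    intro hzero
    exact hpos (Finset.sum_eq_zero_iff.mp hzero q (Finset.mem_univ q))
  haveI hmhaar : m.IsHaarMeasure :=
    { toIsFiniteMeasureOnCompacts := hmfc
      map_mul_left_eq_self := hminv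
      toIsOpenPosMeasure := hmop }
  -- absolute continuity of translates of μH
  have hacH : ∀ h : H, Measure.map (fun x : H => h * x) μH ≪ μH := by
    intro h
    refine Measure.AbsolutelyContinuous.mk fun s hs h0 => ?_
    rw [(hmulH h).map_apply]
    refine hμm ?_
    have h1 : mH ((fun x : H => h * x) ⁻¹' s) = (Measure.map (fun x : H => h * x) mH) s :=
      ((hmulH h).map_apply mH s).symm
    rw [h1, MeasureTheory.map_mul_left_eq_self mH h]
    exact hmμ h0
  have hprobmap : ∀ h : H, IsProbabilityMeasure (Measure.map (fun x : H => h * x) μH) :=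
    fun h => Measure.isProbabilityMeasure_map (hmulHm h).aemeasurable
  -- the local boundedness statement
  have hloc : ∀ K : Set G, IsCompact K → ∃ C : ℝ≥0∞, C ≠ ⊤ ∧ ∀ g ∈ K,
      essSup ((Measure.map (fun x => g * x) μ).rnDeriv μ) μ ≤ C := by
    intro K hK
    set KG : Set G := ⋃ p : (G ⧸ H) × (G ⧸ H), (fun g => (T p.1)⁻¹ * (g * T p.2)) '' K
      with hKGdef
    have hKGcomp : IsCompact KG :=
      isCompact_iUnion fun p => hK.image
        (continuous_const.mul (continuous_id.mul continuous_const))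
    set KH : Set H := ((↑) : H → G) ⁻¹' KG with hKHdef
    have hKHcomp : IsCompact KH :=
      hHclosed.isClosedEmbedding_subtypeVal.isCompact_preimage hKGcomp
    obtain ⟨C₀, hC₀top, hC₀⟩ := hμH.locBdd KH hKHcomp
    refine ⟨C₀ + 1, by simp [hC₀top], fun g hg => ?_⟩
    have hCtop : C₀ + 1 ≠ ⊤ := by simp [hC₀top]
    have hC0 : C₀ + 1 ≠ 0 := by simp
    have hq : ∀ q : G ⧸ H, Measure.map (fun x : H => hgq g q * x) μH ≤ (C₀ + 1) • μH := by
      intro q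
      have hmemKH : hgq g q ∈ KH := by
        show ((T (g • q))⁻¹ * (g * T q) : G) ∈ KG
        exact Set.mem_iUnion.mpr ⟨(g • q, q), ⟨g, hg, rfl⟩⟩
      haveI := hprobmap (hgq g q)
      refine le_trans (aux_le_essSup_smul μH _ (hacH (hgq g q))) ?_
      rw [Measure.le_iff']
      intro s
      simp only [Measure.smul_apply, smul_eq_mul]
      exact mul_le_mul_left ((hC₀ (hgq g q) hmemKH).trans le_self_add) _
    have hle := hmain g (C₀ + 1) hq
    haveI : IsProbabilityMeasure (Measure.map (fun x : G => g * x) μ) :=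
      Measure.isProbabilityMeasure_map (hmulG g).measurable.aemeasurable
    exact aux_essSup_rnDeriv_le μ _ hC0 hCtop hle
  refine ⟨μ, hμprob, ⟨m, hmhaar, ?_, ?_⟩, ?_, ?_⟩
  · -- μ ≪ m
    refine Measure.AbsolutelyContinuous.mk fun s hs h0 => ?_
    rw [hm_apply] at h0
    rw [hμ_apply]
    have hz : ∀ q : G ⧸ H, μH ((f q) ⁻¹' s) = 0 := fun q =>
      hμm (Finset.sum_eq_zero_iff.mp h0 q (Finset.mem_univ q))
    rw [Finset.sum_eq_zero fun q _ => hz q, mul_zero]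
  · -- m ≪ μ
    refine Measure.AbsolutelyContinuous.mk fun s hs h0 => ?_
    rw [hμ_apply] at h0
    have hsum0 : ∑ q : G ⧸ H, μH ((f q) ⁻¹' s) = 0 :=
      ((mul_eq_zero.mp h0).resolve_left (ENNReal.inv_ne_zero.mpr hntop))
    rw [hm_apply]
    exact Finset.sum_eq_zero fun q _ =>
      hmμ (Finset.sum_eq_zero_iff.mp hsum0 q (Finset.mem_univ q))
  · -- essBdd from locBdd with a singleton
    intro g
    obtain ⟨C, hCt, hC⟩ := hloc {g} isCompact_singleton
    exact lt_of_le_of_lt (hC g rfl) hCt.lt_top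
  · exact hloc
end

section
/- Let G be a locally compact group and ℓ a length on G such that every ball B(r) = ℓ⁻¹([0, r]) is closed in G. Then for every compact subset U of G there exists r ≥ 0 with U ⊆ B(r). -/
open Pointwise

/-- Let `G` be a locally compact group and `ℓ` a length on `G` such that every ball
`B(r) = ℓ⁻¹([0, r])` is closed in `G`.  Then every compact subset `U` of `G` is
contained in some ball `B(r)`. -/
theorem compact_subset_ball_of_length
    (G : Type*) [Group G] [TopologicalSpace G] [IsTopologicalGroup G]
    [LocallyCompactSpace G]
    (ℓ : G → ℝ) (h_nonneg : ∀ g : G, 0 ≤ ℓ g) (h_symm : ∀ g : G, ℓ g⁻¹ = ℓ g)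
    (h_subadd : ∀ g h : G, ℓ (g * h) ≤ ℓ g + ℓ h)
    (h_closed : ∀ r : ℝ, IsClosed {g : G | ℓ g ≤ r})
    (U : Set G) (hU : IsCompact U) :
    ∃ r : ℝ, 0 ≤ r ∧ U ⊆ {g : G | ℓ g ≤ r} := by
  obtain ⟨n, x, hx⟩ : ∃ n : ℕ, (interior {g : G | ℓ g ≤ (n : ℝ)}).Nonempty := by
    apply nonempty_interior_of_iUnion_of_closed (fun n : ℕ => h_closed n)
    ext g
    simp only [Set.mem_iUnion, Set.mem_setOf_eq, Set.mem_univ, iff_true]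
    exact ⟨⌈ℓ g⌉₊, Nat.le_ceil _⟩
  have hxn : x ∈ {g : G | ℓ g ≤ (n : ℝ)} := interior_subset hx
  set V : Set G := (fun g => g * x) ⁻¹' interior {g : G | ℓ g ≤ (n : ℝ)} with hVdef
  have hVopen : IsOpen V := isOpen_interior.preimage (by continuity)
  have hV1 : (1 : G) ∈ V := by simpa [hVdef] using hx
  have hVle : ∀ v ∈ V, ℓ v ≤ 2 * n := by
    intro v hv
    have h1 : v * x ∈ {g : G | ℓ g ≤ (n : ℝ)} := interior_subset hv
    calc ℓ v = ℓ (v * x * x⁻¹) := by simp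
      _ ≤ ℓ (v * x) + ℓ x⁻¹ := h_subadd _ _
      _ ≤ n + n := add_le_add h1 (by rw [h_symm]; exact hxn)
      _ = 2 * n := by ring
  have hcover : U ⊆ ⋃ g ∈ U, g • V := fun u hu =>
    Set.mem_biUnion hu ⟨1, hV1, mul_one u⟩
  obtain ⟨t, htU, htfin, htcov⟩ :=
    hU.elim_finite_subcover_image (fun g _ => hVopen.smul g) hcover
  have htfin' := htfin
  rcases t.eq_empty_or_nonempty with rfl | hne
  · refine ⟨2 * n, by positivity, fun u hu => ?_⟩
    simpa using htcov hu
  · lift t to Finset G using htfin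
    have hne' : t.Nonempty := by simpa [Finset.coe_nonempty] using hne
    refine ⟨t.sup' hne' ℓ + 2 * n, ?_, fun u hu => ?_⟩
    · obtain ⟨g, hg⟩ := id hne'
      have : 0 ≤ t.sup' hne' ℓ := le_trans (h_nonneg g) (Finset.le_sup' ℓ hg)
      positivity
    · obtain ⟨g, hg, v, hv, rfl⟩ : ∃ g ∈ t, ∃ v ∈ V, g * v = u := by
        have := htcov hu
        simp only [Set.mem_iUnion, Finset.mem_coe] at this
        obtain ⟨g, hg, hmem⟩ := this
        obtain ⟨v, hv, hgv⟩ := hmem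
        exact ⟨g, hg, v, hv, hgv⟩
      calc ℓ (g * v) ≤ ℓ g + ℓ v := h_subadd _ _
        _ ≤ t.sup' hne' ℓ + 2 * n := add_le_add (Finset.le_sup' ℓ hg) (hVle v hv)
end

section
/- Let G be a topological group whose underlying topological space is a Baire space, V a Banach space, and ϱ : G → GL(V) a group homomorphism into the group of invertible continuous linear operators on V such that the orbit map g ↦ ϱ(g)x is continuous for every x ∈ V. Then the operator norm g ↦ ‖ϱ(g)‖ is bounded on a neighbourhood of every point of G, and consequently the action map G × V → V is jointly continuous. -/
/-- Let `G` be a topological group whose underlying topological space is a Baire space,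
`V` a Banach space, and `ϱ : G → GL(V)` a group homomorphism into the group of
invertible continuous linear operators on `V` such that every orbit map `g ↦ ϱ(g)x` is
continuous.  Then the operator norm `g ↦ ‖ϱ(g)‖` is bounded on a neighbourhood of every
point of `G`, and consequently the action map `G × V → V` is jointly continuous. -/
theorem locally_bounded_of_orbit_continuous_of_baire
    (G : Type*) [Group G] [TopologicalSpace G] [IsTopologicalGroup G] [BaireSpace G]
    (V : Type*) [NormedAddCommGroup V] [NormedSpace ℝ V] [CompleteSpace V]
    (ϱ : G →* (V →L[ℝ] V)ˣ)
    (h_orbit : ∀ x : V, Continuous fun g : G => (ϱ g : V →L[ℝ] V) x) :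
    (∀ g : G, ∃ U ∈ nhds g, ∃ C : ℝ, ∀ h ∈ U, ‖(ϱ h : V →L[ℝ] V)‖ ≤ C) ∧
      Continuous (fun p : G × V => (ϱ p.1 : V →L[ℝ] V) p.2) := by
  -- the closed sets E n = {g | ‖ϱ g‖ ≤ n}
  set E : ℕ → Set G := fun n => {g : G | ∀ x : V, ‖(ϱ g : V →L[ℝ] V) x‖ ≤ (n : ℝ) * ‖x‖}
  have hEclosed : ∀ n, IsClosed (E n) := by
    intro n
    have : E n = ⋂ x : V, {g : G | ‖(ϱ g : V →L[ℝ] V) x‖ ≤ (n : ℝ) * ‖x‖} := by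
      ext g; simp [E, Set.mem_iInter]
    rw [this]
    exact isClosed_iInter fun x =>
      isClosed_le ((h_orbit x).norm) continuous_const
  have hEcover : (⋃ n, E n) = Set.univ := by
    ext g
    simp only [Set.mem_iUnion, Set.mem_univ, iff_true]
    obtain ⟨n, hn⟩ := exists_nat_ge ‖(ϱ g : V →L[ℝ] V)‖
    exact ⟨n, fun x => le_trans ((ϱ g : V →L[ℝ] V).le_opNorm x)
      (mul_le_mul_of_nonneg_right hn (norm_nonneg x))⟩
  obtain ⟨n, g₀, hg₀⟩ := nonempty_interior_of_iUnion_of_closed hEclosed hEcover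
  -- norm bound on interior (E n)
  have hbound : ∀ h ∈ interior (E n), ‖(ϱ h : V →L[ℝ] V)‖ ≤ (n : ℝ) := by
    intro h hh
    exact ContinuousLinearMap.opNorm_le_bound _ (Nat.cast_nonneg n) (interior_subset hh)
  -- local boundedness at every point
  have hloc : ∀ g : G, ∃ U ∈ nhds g, ∃ C : ℝ, ∀ h ∈ U, ‖(ϱ h : V →L[ℝ] V)‖ ≤ C := by
    intro g
    refine ⟨(fun h => g₀ * g⁻¹ * h) ⁻¹' interior (E n), ?_, ‖(ϱ (g * g₀⁻¹) : V →L[ℝ] V)‖ * n, ?_⟩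
    · have hcont : Continuous fun h : G => g₀ * g⁻¹ * h := continuous_const.mul continuous_id
      refine hcont.continuousAt.preimage_mem_nhds ?_
      simpa using isOpen_interior.mem_nhds (by simpa using hg₀)
    · intro h hh
      have heq : (g * g₀⁻¹) * (g₀ * g⁻¹ * h) = h := by group
      have : (ϱ h : V →L[ℝ] V) =
          (ϱ (g * g₀⁻¹) : V →L[ℝ] V).comp (ϱ (g₀ * g⁻¹ * h) : V →L[ℝ] V) := by
        conv_lhs => rw [← heq, map_mul, Units.val_mul]
        rfl
      rw [this]
      calc ‖(ϱ (g * g₀⁻¹) : V →L[ℝ] V).comp (ϱ (g₀ * g⁻¹ * h) : V →L[ℝ] V)‖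
          ≤ ‖(ϱ (g * g₀⁻¹) : V →L[ℝ] V)‖ * ‖(ϱ (g₀ * g⁻¹ * h) : V →L[ℝ] V)‖ :=
            ContinuousLinearMap.opNorm_comp_le _ _
        _ ≤ ‖(ϱ (g * g₀⁻¹) : V →L[ℝ] V)‖ * n :=
            mul_le_mul_of_nonneg_left (hbound _ hh) (norm_nonneg _)
  refine ⟨hloc, ?_⟩
  -- joint continuity
  rw [continuous_iff_continuousAt]
  rintro ⟨g₀', x₀⟩
  obtain ⟨U, hU, C, hC⟩ := hloc g₀'
  have hC0 : (0 : ℝ) ≤ C := le_trans (norm_nonneg _) (hC g₀' (mem_of_mem_nhds hU))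
  have h1 : Filter.Tendsto (fun p : G × V => (ϱ p.1 : V →L[ℝ] V) (p.2 - x₀))
      (nhds (g₀', x₀)) (nhds 0) := by
    have hsq : Filter.Tendsto (fun p : G × V => C * ‖p.2 - x₀‖) (nhds (g₀', x₀)) (nhds 0) := by
      have : Filter.Tendsto (fun p : G × V => p.2 - x₀) (nhds (g₀', x₀)) (nhds 0) := by
        have h' : Continuous fun p : G × V => p.2 - x₀ :=
          continuous_snd.sub continuous_const
        simpa using h'.tendsto (g₀', x₀)
      simpa using (this.norm.const_mul C)
    apply squeeze_zero_norm' _ hsq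
    have hev : ∀ᶠ p : G × V in nhds (g₀', x₀), p.1 ∈ U :=
      continuous_fst.continuousAt (x := (g₀', x₀)) hU
    filter_upwards [hev] with p hp
    calc ‖(ϱ p.1 : V →L[ℝ] V) (p.2 - x₀)‖
        ≤ ‖(ϱ p.1 : V →L[ℝ] V)‖ * ‖p.2 - x₀‖ := (ϱ p.1 : V →L[ℝ] V).le_opNorm _
      _ ≤ C * ‖p.2 - x₀‖ := mul_le_mul_of_nonneg_right (hC _ hp) (norm_nonneg _)
  have h2 : Filter.Tendsto (fun p : G × V => (ϱ p.1 : V →L[ℝ] V) x₀)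
      (nhds (g₀', x₀)) (nhds ((ϱ g₀' : V →L[ℝ] V) x₀)) :=
    ((h_orbit x₀).comp continuous_fst).tendsto (g₀', x₀)
  have := h1.add h2
  simp only [zero_add] at this
  exact this.congr fun p => by rw [map_sub]; abel
end

section
/- Let G be a first-countable topological group (every point has a countable neighbourhood basis), V a Banach space, and ϱ : G → GL(V) a group homomorphism into the group of invertible continuous linear operators on V such that the orbit map g ↦ ϱ(g)x is continuous for every x ∈ V. Then the operator norm g ↦ ‖ϱ(g)‖ is bounded on a neighbourhood of every point of G, and consequently the action map G × V → V is jointly continuous. -/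
/-- Let `G` be a first-countable topological group, `V` a Banach space, and
`ϱ : G → GL(V)` a group homomorphism into the group of invertible continuous linear
operators on `V` such that every orbit map `g ↦ ϱ(g)x` is continuous.  Then the operator
norm `g ↦ ‖ϱ(g)‖` is bounded on a neighbourhood of every point of `G`, and consequently
the action map `G × V → V` is jointly continuous. -/
theorem locally_bounded_of_orbit_continuous_of_firstCountable
    (G : Type*) [Group G] [TopologicalSpace G] [IsTopologicalGroup G]
    [FirstCountableTopology G]
    (V : Type*) [NormedAddCommGroup V] [NormedSpace ℝ V] [CompleteSpace V]
    (ϱ : G →* (V →L[ℝ] V)ˣ)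
    (h_orbit : ∀ x : V, Continuous fun g : G => (ϱ g : V →L[ℝ] V) x) :
    (∀ g : G, ∃ U ∈ nhds g, ∃ C : ℝ, ∀ h ∈ U, ‖(ϱ h : V →L[ℝ] V)‖ ≤ C) ∧
      Continuous (fun p : G × V => (ϱ p.1 : V →L[ℝ] V) p.2) := by
  -- Step 1: boundedness near the identity.
  have key : ∃ U ∈ nhds (1 : G), ∃ C : ℝ, ∀ h ∈ U, ‖(ϱ h : V →L[ℝ] V)‖ ≤ C := by
    by_contra hc
    push_neg at hc
    obtain ⟨b, hb⟩ := (nhds (1 : G)).exists_antitone_basis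
    have hsel : ∀ n : ℕ, ∃ g ∈ b n, (n : ℝ) < ‖(ϱ g : V →L[ℝ] V)‖ := by
      intro n
      by_contra h
      push_neg at h
      obtain ⟨g, hg, hgn⟩ := hc (b n) (hb.mem n) (n : ℝ)
      exact absurd (h g hg) (not_le.mpr hgn)
    choose g hg hgn using hsel
    have hg1 : Filter.Tendsto g Filter.atTop (nhds (1 : G)) := hb.tendsto hg
    have hpt : ∀ x : V, ∃ C, ∀ n, ‖(ϱ (g n) : V →L[ℝ] V) x‖ ≤ C := by
      intro x
      have ht : Filter.Tendsto (fun n => ‖(ϱ (g n) : V →L[ℝ] V) x‖) Filter.atTop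
          (nhds ‖(ϱ (1 : G) : V →L[ℝ] V) x‖) :=
        (((h_orbit x).tendsto _).comp hg1).norm
      obtain ⟨C, hC⟩ := ht.bddAbove_range
      exact ⟨C, fun n => hC ⟨n, rfl⟩⟩
    obtain ⟨C', hC'⟩ := banach_steinhaus (g := fun n => (ϱ (g n) : V →L[ℝ] V)) hpt
    obtain ⟨n, hn⟩ := exists_nat_gt C'
    exact absurd (hC' n) (not_le.mpr (lt_trans hn (hgn n)))
  obtain ⟨U, hU, C, hC⟩ := key
  -- Step 2: boundedness near every point, by translation.
  have loc : ∀ g : G, ∃ U' ∈ nhds g, ∃ C' : ℝ, ∀ h ∈ U', ‖(ϱ h : V →L[ℝ] V)‖ ≤ C' := by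
    intro g
    refine ⟨(fun h => g⁻¹ * h) ⁻¹' U, ?_, ‖(ϱ g : V →L[ℝ] V)‖ * max C 0, ?_⟩
    · have hcont : Continuous fun h : G => g⁻¹ * h := continuous_const.mul continuous_id
      have h1 : g⁻¹ * g = 1 := by group
      exact hcont.continuousAt.preimage_mem_nhds (by rw [h1]; exact hU)
    · intro h hh
      have : (ϱ h : V →L[ℝ] V) = (ϱ g : V →L[ℝ] V) * (ϱ (g⁻¹ * h) : V →L[ℝ] V) := by
        rw [← Units.val_mul, ← map_mul]
        congr 1
        group
      rw [this]
      calc ‖(ϱ g : V →L[ℝ] V) * (ϱ (g⁻¹ * h) : V →L[ℝ] V)‖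
          ≤ ‖(ϱ g : V →L[ℝ] V)‖ * ‖(ϱ (g⁻¹ * h) : V →L[ℝ] V)‖ := norm_mul_le _ _
        _ ≤ ‖(ϱ g : V →L[ℝ] V)‖ * max C 0 :=
            mul_le_mul_of_nonneg_left (le_max_of_le_left (hC _ hh)) (norm_nonneg _)
  refine ⟨loc, ?_⟩
  -- Step 3: joint continuity.
  rw [continuous_iff_continuousAt]
  rintro ⟨g₀, x₀⟩
  obtain ⟨U', hU', C', hC'⟩ := loc g₀
  have e1 : Filter.Tendsto (fun p : G × V => (ϱ p.1 : V →L[ℝ] V) x₀) (nhds (g₀, x₀))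
      (nhds ((ϱ g₀ : V →L[ℝ] V) x₀)) :=
    ((h_orbit x₀).comp continuous_fst).continuousAt
  have e2 : Filter.Tendsto (fun p : G × V => (ϱ p.1 : V →L[ℝ] V) (p.2 - x₀)) (nhds (g₀, x₀))
      (nhds 0) := by
    refine squeeze_zero_norm' (a := fun p : G × V => max C' 0 * ‖p.2 - x₀‖) ?_ ?_
    · filter_upwards [prod_mem_nhds hU' (Filter.univ_mem : Set.univ ∈ nhds x₀)]
        with p hp
      calc ‖(ϱ p.1 : V →L[ℝ] V) (p.2 - x₀)‖
          ≤ ‖(ϱ p.1 : V →L[ℝ] V)‖ * ‖p.2 - x₀‖ := ContinuousLinearMap.le_opNorm _ _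
        _ ≤ max C' 0 * ‖p.2 - x₀‖ :=
            mul_le_mul_of_nonneg_right (le_max_of_le_left (hC' _ hp.1)) (norm_nonneg _)
    · have : Filter.Tendsto (fun p : G × V => max C' 0 * ‖p.2 - x₀‖) (nhds (g₀, x₀))
          (nhds (max C' 0 * ‖x₀ - x₀‖)) :=
        (continuous_const.mul ((continuous_snd.sub continuous_const).norm)).continuousAt
      simpa using this
  have := e2.add e1
  simp only [zero_add] at this
  refine this.congr (fun p => ?_)
  simp [map_sub, sub_add_cancel]
end
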